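/- arXiv:2509.08902 — 5 statements merged into one kernel-verified Lean document; each statement's English description precedes it below -/
import Mathlib

section
/- Let X be a real Banach space, T > 0, H ≥ 0, L_f ≥ 0 and L_τ ≥ 0. Suppose u : ℝ → X satisfies ‖u(t) − u(s)‖ ≤ H·|t − s|^{1/2} for all s, t ∈ (−∞, T]; suppose f : ℝ × X × X → X satisfies ‖f(t₁,v₁,w₁) − f(t₂,v₂,w₂)‖ ≤ L_f·(|t₁ − t₂| + ‖v₁ − v₂‖ + ‖w₁ − w₂‖) for all arguments; and suppose τ : ℝ × X → ℝ is nonnegative and satisfies |τ(t₁,v₁) − τ(t₂,v₂)| ≤ L_τ·(|t₁ − t₂| + ‖v₁ − v₂‖) for all arguments. Define g(t) := f(t, u(t), u(t − τ(t,u(t)))). Then for all 0 ≤ s ≤ t ≤ T, ‖g(t) − g(s)‖ ≤ L_f·(T^{3/4} + H·T^{1/4} + H·((1 + L_τ)·T^{1/2} + L_τ·H)^{1/2}) · |t − s|^{1/4}; in particular g is 1/4-Hölder continuous on [0, T]. -/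
/-- The composed nonlinearity `g(t) = f(t, u(t), u(t − τ(t,u(t))))` is
`1/4`-Hölder continuous on `[0, T]` when `u` is `1/2`-Hölder continuous on `(−∞, T]`
and `f`, `τ` are Lipschitz continuous, with the explicit constant. -/
theorem composed_nonlinearity_quarter_holder
    (X : Type*) [NormedAddCommGroup X] [NormedSpace ℝ X] [CompleteSpace X]
    (T H Lf Lτ : ℝ) (hT : 0 < T) (hH : 0 ≤ H) (hLf : 0 ≤ Lf) (hLτ : 0 ≤ Lτ)
    (u : ℝ → X) (f : ℝ → X → X → X) (τ : ℝ → X → ℝ)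
    (hu : ∀ s t : ℝ, s ≤ T → t ≤ T → ‖u t - u s‖ ≤ H * |t - s| ^ ((1:ℝ)/2))
    (hf : ∀ (t₁ t₂ : ℝ) (v₁ v₂ w₁ w₂ : X),
      ‖f t₁ v₁ w₁ - f t₂ v₂ w₂‖ ≤ Lf * (|t₁ - t₂| + ‖v₁ - v₂‖ + ‖w₁ - w₂‖))
    (hτ_nonneg : ∀ (t : ℝ) (v : X), 0 ≤ τ t v)
    (hτ : ∀ (t₁ t₂ : ℝ) (v₁ v₂ : X),
      |τ t₁ v₁ - τ t₂ v₂| ≤ Lτ * (|t₁ - t₂| + ‖v₁ - v₂‖))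
    (g : ℝ → X)
    (hg : ∀ t : ℝ, g t = f t (u t) (u (t - τ t (u t)))) :
    ∀ s t : ℝ, 0 ≤ s → s ≤ t → t ≤ T →
      ‖g t - g s‖ ≤
        Lf * (T ^ ((3:ℝ)/4) + H * T ^ ((1:ℝ)/4) +
          H * ((1 + Lτ) * T ^ ((1:ℝ)/2) + Lτ * H) ^ ((1:ℝ)/2)) * |t - s| ^ ((1:ℝ)/4) := by
  intro s t hs hst htT
  have hδ0 : (0:ℝ) ≤ t - s := sub_nonneg.mpr hst
  set δ : ℝ := t - s with hδdef
  have habs : |t - s| = δ := abs_of_nonneg hδ0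
  have hsT : s ≤ T := hst.trans htT
  have hδT : δ ≤ T := by simp only [hδdef]; linarith
  have hq0 : (0:ℝ) ≤ δ ^ ((1:ℝ)/4) := Real.rpow_nonneg hδ0 _
  have hq2 : (0:ℝ) ≤ δ ^ ((1:ℝ)/2) := Real.rpow_nonneg hδ0 _
  -- basic rpow splittings
  have hsplit1 : δ = δ ^ ((3:ℝ)/4) * δ ^ ((1:ℝ)/4) := by
    rw [← Real.rpow_add' hδ0 (by norm_num)]; norm_num
  have hsplit2 : δ ^ ((1:ℝ)/2) = δ ^ ((1:ℝ)/4) * δ ^ ((1:ℝ)/4) := by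
    rw [← Real.rpow_add' hδ0 (by norm_num)]; norm_num
  have hsplit3 : δ = δ ^ ((1:ℝ)/2) * δ ^ ((1:ℝ)/2) := by
    rw [← Real.rpow_add' hδ0 (by norm_num)]; norm_num
  -- monotone bounds
  have e34 : δ ^ ((3:ℝ)/4) ≤ T ^ ((3:ℝ)/4) := Real.rpow_le_rpow hδ0 hδT (by norm_num)
  have e14 : δ ^ ((1:ℝ)/4) ≤ T ^ ((1:ℝ)/4) := Real.rpow_le_rpow hδ0 hδT (by norm_num)
  have e12 : δ ^ ((1:ℝ)/2) ≤ T ^ ((1:ℝ)/2) := Real.rpow_le_rpow hδ0 hδT (by norm_num)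
  have hA : δ ≤ T ^ ((3:ℝ)/4) * δ ^ ((1:ℝ)/4) :=
    hsplit1.trans_le (mul_le_mul_of_nonneg_right e34 hq0)
  have hB : δ ^ ((1:ℝ)/2) ≤ T ^ ((1:ℝ)/4) * δ ^ ((1:ℝ)/4) :=
    hsplit2.trans_le (mul_le_mul_of_nonneg_right e14 hq0)
  have hC : δ ≤ T ^ ((1:ℝ)/2) * δ ^ ((1:ℝ)/2) :=
    hsplit3.trans_le (mul_le_mul_of_nonneg_right e12 hq2)
  -- bound on ‖u t - u s‖
  have hu1 : ‖u t - u s‖ ≤ H * δ ^ ((1:ℝ)/2) := by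
    have := hu s t hsT htT
    rwa [habs] at this
  -- bound on the delayed-argument difference
  have htτ : t - τ t (u t) ≤ T := by have := hτ_nonneg t (u t); linarith
  have hsτ : s - τ s (u s) ≤ T := by have := hτ_nonneg s (u s); linarith
  set Δ : ℝ := (t - τ t (u t)) - (s - τ s (u s)) with hΔdef
  have hτb : |τ t (u t) - τ s (u s)| ≤ Lτ * (δ + H * δ ^ ((1:ℝ)/2)) := by
    have h1 := hτ t s (u t) (u s)
    have h2 : |t - s| + ‖u t - u s‖ ≤ δ + H * δ ^ ((1:ℝ)/2) := by
      rw [habs]; linarith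
    exact h1.trans (mul_le_mul_of_nonneg_left h2 hLτ)
  have hΔb : |Δ| ≤ (1 + Lτ) * δ + Lτ * H * δ ^ ((1:ℝ)/2) := by
    have h2 : |Δ| ≤ |t - s| + |τ t (u t) - τ s (u s)| := by
      have : Δ = (t - s) + -(τ t (u t) - τ s (u s)) := by rw [hΔdef]; ring
      rw [this]
      calc |(t - s) + -(τ t (u t) - τ s (u s))| ≤ |t - s| + |-(τ t (u t) - τ s (u s))| :=
            abs_add_le _ _
        _ = |t - s| + |τ t (u t) - τ s (u s)| := by rw [abs_neg]
    rw [habs] at h2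
    have hexp : Lτ * (δ + H * δ ^ ((1:ℝ)/2)) = Lτ * δ + Lτ * H * δ ^ ((1:ℝ)/2) := by ring
    have := hτb
    nlinarith [hτb, hexp]
  -- set E and K
  set E : ℝ := (1 + Lτ) * δ + Lτ * H * δ ^ ((1:ℝ)/2) with hEdef
  set K : ℝ := (1 + Lτ) * T ^ ((1:ℝ)/2) + Lτ * H with hKdef
  have hE0 : 0 ≤ E := le_trans (abs_nonneg Δ) hΔb
  have hK0 : 0 ≤ K := by
    have : (0:ℝ) ≤ T ^ ((1:ℝ)/2) := Real.rpow_nonneg hT.le _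
    have h1 : (0:ℝ) ≤ (1 + Lτ) * T ^ ((1:ℝ)/2) := mul_nonneg (by linarith) this
    have h2 : (0:ℝ) ≤ Lτ * H := mul_nonneg hLτ hH
    rw [hKdef]; linarith
  have hEK : E ≤ K * δ ^ ((1:ℝ)/2) := by
    have h1 : (1 + Lτ) * δ ≤ (1 + Lτ) * (T ^ ((1:ℝ)/2) * δ ^ ((1:ℝ)/2)) :=
      mul_le_mul_of_nonneg_left hC (by linarith)
    calc E = (1 + Lτ) * δ + Lτ * H * δ ^ ((1:ℝ)/2) := hEdef
      _ ≤ (1 + Lτ) * (T ^ ((1:ℝ)/2) * δ ^ ((1:ℝ)/2)) + Lτ * H * δ ^ ((1:ℝ)/2) := by linarith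
      _ = K * δ ^ ((1:ℝ)/2) := by rw [hKdef]; ring
  -- bound the delayed term
  have hu2 : ‖u (t - τ t (u t)) - u (s - τ s (u s))‖ ≤ H * (K ^ ((1:ℝ)/2) * δ ^ ((1:ℝ)/4)) := by
    have h1 := hu (s - τ s (u s)) (t - τ t (u t)) hsτ htτ
    have h2 : |Δ| ^ ((1:ℝ)/2) ≤ E ^ ((1:ℝ)/2) :=
      Real.rpow_le_rpow (abs_nonneg _) hΔb (by norm_num)
    have h3 : E ^ ((1:ℝ)/2) ≤ (K * δ ^ ((1:ℝ)/2)) ^ ((1:ℝ)/2) :=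
      Real.rpow_le_rpow hE0 hEK (by norm_num)
    have h4 : (K * δ ^ ((1:ℝ)/2)) ^ ((1:ℝ)/2) = K ^ ((1:ℝ)/2) * δ ^ ((1:ℝ)/4) := by
      rw [Real.mul_rpow hK0 hq2, ← Real.rpow_mul hδ0]
      norm_num
    have h5 : ‖u (t - τ t (u t)) - u (s - τ s (u s))‖ ≤ H * |Δ| ^ ((1:ℝ)/2) := h1
    calc ‖u (t - τ t (u t)) - u (s - τ s (u s))‖ ≤ H * |Δ| ^ ((1:ℝ)/2) := h5
      _ ≤ H * E ^ ((1:ℝ)/2) := mul_le_mul_of_nonneg_left h2 hH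
      _ ≤ H * (K * δ ^ ((1:ℝ)/2)) ^ ((1:ℝ)/2) := mul_le_mul_of_nonneg_left h3 hH
      _ = H * (K ^ ((1:ℝ)/2) * δ ^ ((1:ℝ)/4)) := by rw [h4]
  -- combine everything
  have hmain : ‖g t - g s‖ ≤
      Lf * (|t - s| + ‖u t - u s‖ + ‖u (t - τ t (u t)) - u (s - τ s (u s))‖) := by
    rw [hg t, hg s]; exact hf t s (u t) (u s) _ _
  rw [habs]
  calc ‖g t - g s‖
      ≤ Lf * (|t - s| + ‖u t - u s‖ + ‖u (t - τ t (u t)) - u (s - τ s (u s))‖) := hmain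
    _ ≤ Lf * (T ^ ((3:ℝ)/4) * δ ^ ((1:ℝ)/4) + H * (T ^ ((1:ℝ)/4) * δ ^ ((1:ℝ)/4)) +
          H * (K ^ ((1:ℝ)/2) * δ ^ ((1:ℝ)/4))) := by
        apply mul_le_mul_of_nonneg_left _ hLf
        rw [habs]
        have hB' : ‖u t - u s‖ ≤ H * (T ^ ((1:ℝ)/4) * δ ^ ((1:ℝ)/4)) :=
          hu1.trans (mul_le_mul_of_nonneg_left hB hH)
        linarith [hu2]
    _ = Lf * (T ^ ((3:ℝ)/4) + H * T ^ ((1:ℝ)/4) + H * K ^ ((1:ℝ)/2)) * δ ^ ((1:ℝ)/4) := by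
        ring
end

section
/- Let X be a real Banach space, t ∈ ℝ, L_u, L_f, L_τ, S ≥ 0. Suppose u, w : ℝ → X, that u satisfies ‖u(a) − u(b)‖ ≤ L_u·|a − b| for all a, b ∈ (−∞, t], and that ‖u(s) − w(s)‖ ≤ S for all s ≤ t. Suppose f : ℝ × X × X → X satisfies ‖f(t₁,v₁,w₁) − f(t₂,v₂,w₂)‖ ≤ L_f·(|t₁ − t₂| + ‖v₁ − v₂‖ + ‖w₁ − w₂‖) for all arguments, and τ : ℝ × X → ℝ is nonnegative and satisfies |τ(t₁,v₁) − τ(t₂,v₂)| ≤ L_τ·(|t₁ − t₂| + ‖v₁ − v₂‖) for all arguments. Then ‖f(t, u(t), u(t − τ(t,u(t)))) − f(t, w(t), w(t − τ(t,w(t))))‖ ≤ (2·L_f + L_f·L_u·L_τ)·S. -/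
/-- Stability estimate for the full nonlinear delayed term: if `u` is `L_u`-Lipschitz
on `(−∞, t]` and `‖u − w‖ ≤ S` on `(−∞, t]`, then the difference of the composed
nonlinearities at `t` is bounded by `(2 L_f + L_f L_u L_τ) S`. -/
theorem delayed_term_stability
    (X : Type*) [NormedAddCommGroup X] [NormedSpace ℝ X] [CompleteSpace X]
    (t Lu Lf Lτ S : ℝ) (hLu : 0 ≤ Lu) (hLf : 0 ≤ Lf) (hLτ : 0 ≤ Lτ) (hS : 0 ≤ S)
    (u w : ℝ → X) (f : ℝ → X → X → X) (τ : ℝ → X → ℝ)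
    (hu : ∀ a b : ℝ, a ≤ t → b ≤ t → ‖u a - u b‖ ≤ Lu * |a - b|)
    (huw : ∀ s : ℝ, s ≤ t → ‖u s - w s‖ ≤ S)
    (hf : ∀ (t₁ t₂ : ℝ) (v₁ v₂ w₁ w₂ : X),
      ‖f t₁ v₁ w₁ - f t₂ v₂ w₂‖ ≤ Lf * (|t₁ - t₂| + ‖v₁ - v₂‖ + ‖w₁ - w₂‖))
    (hτ_nonneg : ∀ (s : ℝ) (v : X), 0 ≤ τ s v)
    (hτ : ∀ (t₁ t₂ : ℝ) (v₁ v₂ : X),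
      |τ t₁ v₁ - τ t₂ v₂| ≤ Lτ * (|t₁ - t₂| + ‖v₁ - v₂‖)) :
    ‖f t (u t) (u (t - τ t (u t))) - f t (w t) (w (t - τ t (w t)))‖ ≤
      (2 * Lf + Lf * Lu * Lτ) * S := by
  set a := t - τ t (u t) with ha
  set b := t - τ t (w t) with hb
  have hat : a ≤ t := by have := hτ_nonneg t (u t); simp [ha]; linarith
  have hbt : b ≤ t := by have := hτ_nonneg t (w t); simp [hb]; linarith
  have h1 : ‖u t - w t‖ ≤ S := huw t le_rfl
  have hab : |a - b| ≤ Lτ * ‖u t - w t‖ := by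
    have := hτ t t (u t) (w t)
    simp only [ha, hb]
    have : |τ t (u t) - τ t (w t)| ≤ Lτ * (|t - t| + ‖u t - w t‖) := this
    simp at this
    calc |t - τ t (u t) - (t - τ t (w t))| = |τ t (w t) - τ t (u t)| := by ring_nf
      _ = |τ t (u t) - τ t (w t)| := abs_sub_comm _ _
      _ ≤ Lτ * ‖u t - w t‖ := this
  have h2 : ‖u a - w b‖ ≤ Lu * Lτ * S + S := by
    calc ‖u a - w b‖ ≤ ‖u a - u b‖ + ‖u b - w b‖ := by
          have := norm_sub_le_norm_sub_add_norm_sub (u a) (u b) (w b)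
          linarith [norm_add_le (u a - u b) (u b - w b), norm_sub_le (u a - u b) (w b - u b)]
      _ ≤ Lu * |a - b| + S := add_le_add (hu a b hat hbt) (huw b hbt)
      _ ≤ Lu * (Lτ * ‖u t - w t‖) + S := by
          have := mul_le_mul_of_nonneg_left hab hLu; linarith
      _ ≤ Lu * (Lτ * S) + S := by
          have : Lτ * ‖u t - w t‖ ≤ Lτ * S := mul_le_mul_of_nonneg_left h1 hLτ
          nlinarith
      _ = Lu * Lτ * S + S := by ring
  calc ‖f t (u t) (u a) - f t (w t) (w b)‖
      ≤ Lf * (|t - t| + ‖u t - w t‖ + ‖u a - w b‖) := hf t t (u t) (w t) (u a) (w b)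
    _ = Lf * (‖u t - w t‖ + ‖u a - w b‖) := by simp
    _ ≤ Lf * (S + (Lu * Lτ * S + S)) := by
        apply mul_le_mul_of_nonneg_left _ hLf; linarith
    _ = (2 * Lf + Lf * Lu * Lτ) * S := by ring
end

section
/- Let X be a real Banach space, A : X → X a bounded linear operator, T > 0, L_f, L_τ ≥ 0. Suppose f : ℝ × X × X → X satisfies ‖f(t₁,v₁,w₁) − f(t₂,v₂,w₂)‖ ≤ L_f·(|t₁ − t₂| + ‖v₁ − v₂‖ + ‖w₁ − w₂‖) for all arguments, and τ : ℝ × X → ℝ is nonnegative and satisfies |τ(t₁,v₁) − τ(t₂,v₂)| ≤ L_τ·(|t₁ − t₂| + ‖v₁ − v₂‖) for all arguments. Let u, w : ℝ → X be continuous on (−∞, T], with u(t) = w(t) for all t ≤ 0, and suppose u is Lipschitz continuous on (−∞, T]. If both u and w satisfy the mild-solution equation v(t) = exp(−t A) v(0) + ∫₀ᵗ exp(−(t − s) A) f(s, v(s), v(s − τ(s, v(s)))) ds for all t ∈ [0, T], then u(t) = w(t) for all t ∈ [0, T]. -/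
lemma int_aux (c m : ℝ) (n : ℕ) (t : ℝ) :
    (∫ s in (0:ℝ)..t, c * (m * (c * s) ^ n / n.factorial)) =
      m * (c * t) ^ (n + 1) / (n + 1).factorial := by
  have hrw : ∀ s : ℝ, c * (m * (c * s) ^ n / n.factorial) =
      (c ^ (n + 1) * m / n.factorial) * s ^ n := by
    intro s; rw [mul_pow]; ring
  simp_rw [hrw]
  rw [intervalIntegral.integral_const_mul, integral_pow, Nat.factorial_succ, mul_pow]
  have hnf : (n.factorial : ℝ) ≠ 0 := Nat.cast_ne_zero.mpr n.factorial_ne_zero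
  push_cast
  field_simp
  ring

lemma my_norm_exp_le {X : Type*} [NormedAddCommGroup X] [NormedSpace ℝ X] [CompleteSpace X]
    (B : X →L[ℝ] X) : ‖NormedSpace.exp B‖ ≤ Real.exp ‖B‖ := by
  have h1 : NormedSpace.exp B = ∑' n : ℕ, (n.factorial : ℝ)⁻¹ • B ^ n := by
    rw [NormedSpace.exp_eq_tsum ℝ]
  have h2 : Real.exp ‖B‖ = ∑' n : ℕ, (n.factorial : ℝ)⁻¹ • ‖B‖ ^ n := by
    rw [Real.exp_eq_exp_ℝ, NormedSpace.exp_eq_tsum ℝ]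
  rw [h1, h2]
  refine le_trans (norm_tsum_le_tsum_norm (NormedSpace.norm_expSeries_summable' B)) ?_
  refine Summable.tsum_le_tsum ?_ (NormedSpace.norm_expSeries_summable' B)
    (NormedSpace.expSeries_summable' (𝕂 := ℝ) ‖B‖)
  intro n
  have hn : ‖(n.factorial : ℝ)⁻¹ • B ^ n‖ = ‖(n.factorial : ℝ)⁻¹‖ * ‖B ^ n‖ :=
    norm_smul (β := X →L[ℝ] X) ((n.factorial : ℝ)⁻¹) (B ^ n)
  rw [hn, smul_eq_mul, norm_inv, Real.norm_natCast]
  refine mul_le_mul_of_nonneg_left ?_ (by positivity)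
  cases n with
  | zero => simp only [pow_zero]; exact ContinuousLinearMap.norm_id_le
  | succ n => exact norm_pow_le' B n.succ_pos

set_option maxHeartbeats 1000000 in
/-- Uniqueness of mild solutions of the semilinear delay evolution equation
`u′ + A u = f(t, u(t), u(t − τ(t,u(t))))` with common history on `(−∞, 0]`,
in the case of a bounded operator `A`. -/
theorem mild_solution_unique
    (X : Type*) [NormedAddCommGroup X] [NormedSpace ℝ X] [CompleteSpace X]
    (A : X →L[ℝ] X) (T Lf Lτ : ℝ) (hT : 0 < T) (hLf : 0 ≤ Lf) (hLτ : 0 ≤ Lτ)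
    (f : ℝ → X → X → X) (τ : ℝ → X → ℝ) (u w : ℝ → X)
    (hf : ∀ (t₁ t₂ : ℝ) (v₁ v₂ w₁ w₂ : X),
      ‖f t₁ v₁ w₁ - f t₂ v₂ w₂‖ ≤ Lf * (|t₁ - t₂| + ‖v₁ - v₂‖ + ‖w₁ - w₂‖))
    (hτ_nonneg : ∀ (s : ℝ) (v : X), 0 ≤ τ s v)
    (hτ : ∀ (t₁ t₂ : ℝ) (v₁ v₂ : X),
      |τ t₁ v₁ - τ t₂ v₂| ≤ Lτ * (|t₁ - t₂| + ‖v₁ - v₂‖))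
    (hu_cont : ContinuousOn u (Set.Iic T)) (hw_cont : ContinuousOn w (Set.Iic T))
    (h_hist : ∀ t : ℝ, t ≤ 0 → u t = w t)
    (hu_lip : ∃ Lu : ℝ, 0 ≤ Lu ∧ ∀ a b : ℝ, a ≤ T → b ≤ T → ‖u a - u b‖ ≤ Lu * |a - b|)
    (hmild_u : ∀ t ∈ Set.Icc (0:ℝ) T,
      u t = (NormedSpace.exp (-(t • A))) (u 0) +
        ∫ s in (0:ℝ)..t, (NormedSpace.exp (-((t - s) • A)))
          (f s (u s) (u (s - τ s (u s)))))
    (hmild_w : ∀ t ∈ Set.Icc (0:ℝ) T,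
      w t = (NormedSpace.exp (-(t • A))) (w 0) +
        ∫ s in (0:ℝ)..t, (NormedSpace.exp (-((t - s) • A)))
          (f s (w s) (w (s - τ s (w s))))) :
    ∀ t ∈ Set.Icc (0:ℝ) T, u t = w t := by
  obtain ⟨Lu, hLu, hu_lipT⟩ := hu_lip
  obtain ⟨M, hMdef⟩ : ∃ M : ℝ, M = Real.exp (‖A‖ * T) := ⟨_, rfl⟩
  have hM0 : 0 ≤ M := hMdef ▸ (Real.exp_pos _).le
  obtain ⟨C, hCdef⟩ : ∃ C : ℝ, C = M * Lf * (2 + Lu * Lτ) := ⟨_, rfl⟩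
  have hC0 : 0 ≤ C := by
    rw [hCdef]
    have : (0:ℝ) ≤ 2 + Lu * Lτ := by nlinarith
    exact mul_nonneg (mul_nonneg hM0 hLf) this
  -- continuity of f and τ as maps on products
  have hfc : Continuous fun p : ℝ × X × X => f p.1 p.2.1 p.2.2 := by
    refine (LipschitzWith.of_dist_le_mul (K := ⟨3 * Lf, by positivity⟩) ?_).continuous
    intro p q
    have h1 : dist p.1 q.1 ≤ dist p q := by rw [Prod.dist_eq]; exact le_max_left _ _
    have h2 : dist p.2 q.2 ≤ dist p q := by rw [Prod.dist_eq]; exact le_max_right _ _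
    have h3 : dist p.2.1 q.2.1 ≤ dist p.2 q.2 := by rw [Prod.dist_eq]; exact le_max_left _ _
    have h4 : dist p.2.2 q.2.2 ≤ dist p.2 q.2 := by rw [Prod.dist_eq]; exact le_max_right _ _
    have hb := hf p.1 q.1 p.2.1 q.2.1 p.2.2 q.2.2
    rw [dist_eq_norm]
    rw [Real.dist_eq] at h1
    rw [dist_eq_norm] at h3 h4
    have hd : (0:ℝ) ≤ dist p q := dist_nonneg
    calc ‖f p.1 p.2.1 p.2.2 - f q.1 q.2.1 q.2.2‖
        ≤ Lf * (|p.1 - q.1| + ‖p.2.1 - q.2.1‖ + ‖p.2.2 - q.2.2‖) := hb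
      _ ≤ Lf * (dist p q + dist p q + dist p q) :=
          mul_le_mul_of_nonneg_left
            (add_le_add (add_le_add h1 (h3.trans h2)) (h4.trans h2)) hLf
      _ = (⟨3 * Lf, by positivity⟩ : NNReal) * dist p q := by push_cast; ring
  have hτc : Continuous fun p : ℝ × X => τ p.1 p.2 := by
    refine (LipschitzWith.of_dist_le_mul (K := ⟨2 * Lτ, by positivity⟩) ?_).continuous
    intro p q
    have h1 : dist p.1 q.1 ≤ dist p q := by rw [Prod.dist_eq]; exact le_max_left _ _
    have h2 : dist p.2 q.2 ≤ dist p q := by rw [Prod.dist_eq]; exact le_max_right _ _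
    have hb := hτ p.1 q.1 p.2 q.2
    rw [Real.dist_eq]
    rw [Real.dist_eq] at h1
    rw [dist_eq_norm] at h2
    have hd : (0:ℝ) ≤ dist p q := dist_nonneg
    calc |τ p.1 p.2 - τ q.1 q.2|
        ≤ Lτ * (|p.1 - q.1| + ‖p.2 - q.2‖) := hb
      _ ≤ Lτ * (dist p q + dist p q) :=
          mul_le_mul_of_nonneg_left (add_le_add h1 h2) hLτ
      _ = (⟨2 * Lτ, by positivity⟩ : NNReal) * dist p q := by push_cast; ring
  -- continuity of the integrands
  have key_cont : ∀ v : ℝ → X, ContinuousOn v (Set.Iic T) → ∀ t ∈ Set.Icc (0:ℝ) T,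
      ContinuousOn (fun s => (NormedSpace.exp (-((t - s) • A)))
        (f s (v s) (v (s - τ s (v s))))) (Set.Icc 0 t) := by
    intro v hv t ht
    have hsub : Set.Icc (0:ℝ) t ⊆ Set.Iic T := fun s hs => le_trans hs.2 ht.2
    have hv' : ContinuousOn v (Set.Icc 0 t) := hv.mono hsub
    have hστ : ContinuousOn (fun s => s - τ s (v s)) (Set.Icc 0 t) :=
      continuousOn_id.sub (hτc.comp_continuousOn (f := fun s => (s, v s)) (continuousOn_id.prodMk hv'))
    have hmaps : Set.MapsTo (fun s => s - τ s (v s)) (Set.Icc 0 t) (Set.Iic T) := by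
      intro s hs
      have := hτ_nonneg s (v s)
      simp only [Set.mem_Iic]
      have : s - τ s (v s) ≤ s := by linarith
      exact this.trans (hs.2.trans ht.2)
    have hvd : ContinuousOn (fun s => v (s - τ s (v s))) (Set.Icc 0 t) :=
      hv.comp hστ hmaps
    have hF : ContinuousOn (fun s => f s (v s) (v (s - τ s (v s)))) (Set.Icc 0 t) :=
      hfc.comp_continuousOn (continuousOn_id.prodMk (hv'.prodMk hvd))
    have hE : ContinuousOn (fun s => NormedSpace.exp (-((t - s) • A))) (Set.Icc 0 t) :=
      ((continuous_iff_continuousAt.2 fun x => (NormedSpace.exp_analytic (𝕂 := ℝ) x).continuousAt : Continuous (NormedSpace.exp : (X →L[ℝ] X) → X →L[ℝ] X)).comp (((continuous_const.sub continuous_id).smul continuous_const).neg)).continuousOn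
    exact hE.clm_apply hF
  -- uniform bound on the difference
  obtain ⟨M₀, hM₀0, hM₀⟩ : ∃ M₀, 0 ≤ M₀ ∧ ∀ t ∈ Set.Icc (0:ℝ) T, ‖u t - w t‖ ≤ M₀ := by
    obtain ⟨M₀, hM₀⟩ := isCompact_Icc.exists_bound_of_continuousOn
      ((hu_cont.mono (Set.Icc_subset_Iic_self)).sub (hw_cont.mono (Set.Icc_subset_Iic_self)))
    exact ⟨M₀, le_trans (norm_nonneg _) (hM₀ 0 ⟨le_rfl, hT.le⟩), hM₀⟩
  have h0 : u 0 = w 0 := h_hist 0 le_rfl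
  -- main induction
  have key : ∀ n : ℕ, ∀ t ∈ Set.Icc (0:ℝ) T,
      ‖u t - w t‖ ≤ M₀ * (C * t) ^ n / n.factorial := by
    intro n
    induction n with
    | zero => intro t ht; simpa using hM₀ t ht
    | succ n ih =>
      intro t ht
      obtain ⟨ht0, htT⟩ := ht
      have htMem : t ∈ Set.Icc (0:ℝ) T := ⟨ht0, htT⟩
      have hIcc : Set.uIcc (0:ℝ) t = Set.Icc 0 t := Set.uIcc_of_le ht0
      have hIu : IntervalIntegrable (fun s => (NormedSpace.exp (-((t - s) • A)))
          (f s (u s) (u (s - τ s (u s))))) MeasureTheory.volume 0 t := by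
        apply ContinuousOn.intervalIntegrable
        rw [hIcc]; exact key_cont u hu_cont t htMem
      have hIw : IntervalIntegrable (fun s => (NormedSpace.exp (-((t - s) • A)))
          (f s (w s) (w (s - τ s (w s))))) MeasureTheory.volume 0 t := by
        apply ContinuousOn.intervalIntegrable
        rw [hIcc]; exact key_cont w hw_cont t htMem
      have hbound : ∀ s ∈ Set.Ioc (0:ℝ) t,
          ‖(NormedSpace.exp (-((t - s) • A))) (f s (u s) (u (s - τ s (u s)))) -
            (NormedSpace.exp (-((t - s) • A))) (f s (w s) (w (s - τ s (w s))))‖ ≤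
          C * (M₀ * (C * s) ^ n / n.factorial) := by
        intro s hs
        obtain ⟨hs0, hst⟩ := hs
        set σu := s - τ s (u s) with hσu
        set σw := s - τ s (w s) with hσw
        have hsT : s ≤ T := hst.trans htT
        have hτu := hτ_nonneg s (u s)
        have hτw := hτ_nonneg s (w s)
        have hσuT : σu ≤ T := by rw [hσu]; linarith
        have hσwT : σw ≤ T := by rw [hσw]; linarith
        have hD0 : (0:ℝ) ≤ M₀ * (C * s) ^ n / n.factorial := by positivity
        have hihs : ‖u s - w s‖ ≤ M₀ * (C * s) ^ n / n.factorial := ih s ⟨hs0.le, hsT⟩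
        have hdel2 : ‖u σw - w σw‖ ≤ M₀ * (C * s) ^ n / n.factorial := by
          rcases le_or_gt σw 0 with h | h
          · rw [h_hist σw h, sub_self, norm_zero]; exact hD0
          · refine (ih σw ⟨h.le, hσwT⟩).trans ?_
            have hpow : (C * σw) ^ n ≤ (C * s) ^ n := by
              apply pow_le_pow_left₀ (by positivity)
              have : σw ≤ s := by rw [hσw]; linarith
              nlinarith
            gcongr
        have hdel1 : ‖u σu - u σw‖ ≤ Lu * (Lτ * ‖u s - w s‖) := by
          have h1 := hu_lipT σu σw hσuT hσwT
          have h2 : |σu - σw| ≤ Lτ * ‖u s - w s‖ := by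
            have h3 := hτ s s (u s) (w s)
            simp only [sub_self, abs_zero, zero_add] at h3
            have h4 : σu - σw = -(τ s (u s) - τ s (w s)) := by rw [hσu, hσw]; ring
            rw [h4, abs_neg]
            exact h3
          calc ‖u σu - u σw‖ ≤ Lu * |σu - σw| := h1
            _ ≤ Lu * (Lτ * ‖u s - w s‖) := mul_le_mul_of_nonneg_left h2 hLu
        have hfd : ‖f s (u s) (u σu) - f s (w s) (w σw)‖ ≤
            Lf * (2 + Lu * Lτ) * (M₀ * (C * s) ^ n / n.factorial) := by
          have hb := hf s s (u s) (w s) (u σu) (w σw)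
          simp only [sub_self, abs_zero, zero_add] at hb
          have h3 : ‖u σu - w σw‖ ≤ ‖u σu - u σw‖ + ‖u σw - w σw‖ :=
            norm_sub_le_norm_sub_add_norm_sub _ _ _
          nlinarith [hihs, hdel1, hdel2, hLf, hD0, norm_nonneg (u s - w s),
            mul_le_mul_of_nonneg_left hihs (mul_nonneg hLu hLτ)]
        have hA : ‖NormedSpace.exp (-((t - s) • A))‖ ≤ M := by
          refine (my_norm_exp_le _).trans ?_
          rw [hMdef]
          apply Real.exp_le_exp.mpr
          have hsm : ‖(t - s) • A‖ = ‖(t - s : ℝ)‖ * ‖A‖ := norm_smul (β := X →L[ℝ] X) (t - s) A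
          rw [norm_neg, hsm, Real.norm_eq_abs,
            abs_of_nonneg (by linarith : (0:ℝ) ≤ t - s)]
          have hAn := norm_nonneg A
          nlinarith
        rw [← map_sub]
        calc ‖(NormedSpace.exp (-((t - s) • A))) (f s (u s) (u σu) - f s (w s) (w σw))‖
            ≤ ‖NormedSpace.exp (-((t - s) • A))‖ * ‖f s (u s) (u σu) - f s (w s) (w σw)‖ :=
              ContinuousLinearMap.le_opNorm _ _
          _ ≤ M * (Lf * (2 + Lu * Lτ) * (M₀ * (C * s) ^ n / n.factorial)) :=
              mul_le_mul hA hfd (norm_nonneg _) hM0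
          _ = C * (M₀ * (C * s) ^ n / n.factorial) := by rw [hCdef]; ring
      have hbint : IntervalIntegrable (fun s => C * (M₀ * (C * s) ^ n / n.factorial))
          MeasureTheory.volume 0 t := by
        apply Continuous.intervalIntegrable
        fun_prop
      have hval : (∫ s in (0:ℝ)..t, C * (M₀ * (C * s) ^ n / n.factorial)) =
          M₀ * (C * t) ^ (n + 1) / (n + 1).factorial := int_aux C M₀ n t
      rw [hmild_u t htMem, hmild_w t htMem, h0, add_sub_add_left_eq_sub,
        ← intervalIntegral.integral_sub hIu hIw]
      have hae : ∀ᵐ s ∂MeasureTheory.volume.restrict (Set.uIoc (0:ℝ) t),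
          ‖(NormedSpace.exp (-((t - s) • A))) (f s (u s) (u (s - τ s (u s)))) -
            (NormedSpace.exp (-((t - s) • A))) (f s (w s) (w (s - τ s (w s))))‖ ≤
          C * (M₀ * (C * s) ^ n / n.factorial) :=
        (MeasureTheory.ae_restrict_mem measurableSet_uIoc).mono
          (fun s hs => hbound s (by rwa [Set.uIoc_of_le ht0] at hs))
      refine ((intervalIntegral.norm_integral_le_of_norm_le ht0 (Filter.Eventually.of_forall fun s hs => hbound s hs) hbint).trans (le_abs_self _)).trans ?_
      rw [hval, abs_of_nonneg (by positivity)]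
  -- conclude
  intro t ht
  have hlim : Filter.Tendsto (fun n : ℕ => M₀ * (C * t) ^ n / n.factorial)
      Filter.atTop (nhds 0) := by
    have := FloorSemiring.tendsto_pow_div_factorial_atTop (K := ℝ) (C * t)
    have h2 := this.const_mul M₀
    simpa [mul_div_assoc] using h2
  have : ‖u t - w t‖ ≤ 0 := ge_of_tendsto' hlim (fun n => key n t ht)
  have := le_antisymm this (norm_nonneg _)
  rwa [norm_eq_zero, sub_eq_zero] at this
end

section
/- Let X be a real Banach space, A : X → X a bounded linear operator, t_n ∈ ℝ, h > 0, c₂ ∈ (0, 1], and set C_s := sup_{σ ∈ [0, h]} ‖exp(−σ A)‖. Suppose f : ℝ × X × X → X satisfies ‖f(t₁,v₁,w₁) − f(t₂,v₂,w₂)‖ ≤ L_f·(|t₁ − t₂| + ‖v₁ − v₂‖ + ‖w₁ − w₂‖) for all arguments, and τ : ℝ × X → ℝ is nonnegative and satisfies |τ(t₁,v₁) − τ(t₂,v₂)| ≤ L_τ·(|t₁ − t₂| + ‖v₁ − v₂‖) for all arguments. Let U : (−∞, t_n] → X be continuous, u_n := U(t_n), t_{n2} := t_n + c₂ h, G₁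 := f(t_n, u_n, U(t_n − τ(t_n, u_n))), U_{n2} := exp(−c₂ h A) u_n + (∫₀^{c₂h} exp(−(c₂h − σ) A) dσ)·G₁, and for θ ∈ [0, 1] define the weight operators W₁(θ) := ∫₀^{θh} exp(−(θh − σ) A) dσ and W₂(θ) := (1/(c₂ h))·∫₀^{θh} exp(−(θh − σ) A)·σ dσ. If L_f·C_s·h < 2·c₂, then there exists a unique continuous function V : [t_n, t_n + h] → X with V(t_n) = u_n such that for all θ ∈ [0, 1], V(t_n + θ h) = exp(−θ h A) u_n + (W₁(θ) − W₂(θ)) G₁ + W₂(θ)·f(t_{n2}, U_{n2}, Ṽ(t_{n2} − τ(t_{n2}, U_{n2}))), where Ṽ(t) := U(t) for t ≤ t_n and Ṽ(t) := V(t) for t ∈ [t_n, t_n + h]. -/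
set_option maxHeartbeats 1000000


/-- Unique solvability of (the continuous extension of) one step of the second
order exponential Runge–Kutta method for the state-dependent delay problem when
overlapping occurs: if `L_f C_s h < 2 c₂`, there is a unique continuous function
`V` on `[t_n, t_n + h]` with `V(t_n) = u_n` satisfying the implicit scheme. -/
theorem second_order_scheme_unique_solvability
    (X : Type*) [NormedAddCommGroup X] [NormedSpace ℝ X] [CompleteSpace X]
    (A : X →L[ℝ] X) (tn h c₂ Lf Lτ Cs : ℝ)
    (hh : 0 < h) (hc₂ : c₂ ∈ Set.Ioc (0:ℝ) 1)
    (hCs : Cs = sSup ((fun σ : ℝ => ‖NormedSpace.exp (-(σ • A))‖) '' Set.Icc 0 h))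
    (f : ℝ → X → X → X) (τ : ℝ → X → ℝ) (U : ℝ → X)
    (hf : ∀ (t₁ t₂ : ℝ) (v₁ v₂ w₁ w₂ : X),
      ‖f t₁ v₁ w₁ - f t₂ v₂ w₂‖ ≤ Lf * (|t₁ - t₂| + ‖v₁ - v₂‖ + ‖w₁ - w₂‖))
    (hτ_nonneg : ∀ (t : ℝ) (v : X), 0 ≤ τ t v)
    (hτ : ∀ (t₁ t₂ : ℝ) (v₁ v₂ : X),
      |τ t₁ v₁ - τ t₂ v₂| ≤ Lτ * (|t₁ - t₂| + ‖v₁ - v₂‖))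
    (hU_cont : ContinuousOn U (Set.Iic tn))
    (G₁ : X) (hG₁ : G₁ = f tn (U tn) (U (tn - τ tn (U tn))))
    (Un2 : X) (hUn2 : Un2 = (NormedSpace.exp (-((c₂ * h) • A))) (U tn) +
      (∫ σ in (0:ℝ)..(c₂ * h), NormedSpace.exp (-((c₂ * h - σ) • A))) G₁)
    (W₁ W₂ : ℝ → X →L[ℝ] X)
    (hW₁ : ∀ θ : ℝ, W₁ θ = ∫ σ in (0:ℝ)..(θ * h),
      NormedSpace.exp (-((θ * h - σ) • A)))
    (hW₂ : ∀ θ : ℝ, W₂ θ = (1 / (c₂ * h)) • ∫ σ in (0:ℝ)..(θ * h),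
      σ • NormedSpace.exp (-((θ * h - σ) • A)))
    (hsmall : Lf * Cs * h < 2 * c₂) :
    ∃ V : ℝ → X,
      (ContinuousOn V (Set.Icc tn (tn + h)) ∧ V tn = U tn ∧
        ∀ θ ∈ Set.Icc (0:ℝ) 1,
          V (tn + θ * h) =
            (NormedSpace.exp (-((θ * h) • A))) (U tn) + (W₁ θ - W₂ θ) G₁ +
              (W₂ θ) (f (tn + c₂ * h) Un2
                ((fun t : ℝ => if t ≤ tn then U t else V t)
                  ((tn + c₂ * h) - τ (tn + c₂ * h) Un2)))) ∧
      ∀ V' : ℝ → X,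
        (ContinuousOn V' (Set.Icc tn (tn + h)) ∧ V' tn = U tn ∧
          ∀ θ ∈ Set.Icc (0:ℝ) 1,
            V' (tn + θ * h) =
              (NormedSpace.exp (-((θ * h) • A))) (U tn) + (W₁ θ - W₂ θ) G₁ +
                (W₂ θ) (f (tn + c₂ * h) Un2
                  ((fun t : ℝ => if t ≤ tn then U t else V' t)
                    ((tn + c₂ * h) - τ (tn + c₂ * h) Un2)))) →
        ∀ t ∈ Set.Icc tn (tn + h), V' t = V t := by
  obtain ⟨hc₂0, hc₂1⟩ := hc₂
  have hh0 : h ≠ 0 := ne_of_gt hh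
  -- continuity of the exponential
  have hexpo_cont : Continuous (fun s : ℝ => NormedSpace.exp (-(s • A))) :=
    (continuous_iff_continuousAt.2 fun x => (NormedSpace.exp_analytic (𝕂 := ℝ) x).continuousAt).comp ((continuous_id.smul continuous_const).neg)
  have hint1 : ∀ a b : ℝ,
      IntervalIntegrable (fun s : ℝ => NormedSpace.exp (-(s • A)))
        MeasureTheory.volume a b :=
    fun a b => hexpo_cont.intervalIntegrable a b
  have hint2 : ∀ a b : ℝ,
      IntervalIntegrable (fun s : ℝ => s • NormedSpace.exp (-(s • A)))
        MeasureTheory.volume a b :=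
    fun a b => (continuous_id.smul hexpo_cont).intervalIntegrable a b
  -- properties of Cs
  have hCs_ub : ∀ s ∈ Set.Icc (0:ℝ) h, ‖NormedSpace.exp (-(s • A))‖ ≤ Cs := by
    intro s hs
    rw [hCs]
    refine le_csSup ?_ (Set.mem_image_of_mem _ hs)
    exact (isCompact_Icc.image hexpo_cont.norm).bddAbove
  have hCs0 : 0 ≤ Cs := le_trans (norm_nonneg _) (hCs_ub 0 ⟨le_refl _, hh.le⟩)
  -- rewriting of the weights
  have hW₁' : ∀ θ : ℝ, W₁ θ = ∫ s in (0:ℝ)..(θ * h), NormedSpace.exp (-(s • A)) := by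
    intro θ
    rw [hW₁]
    simpa using
      intervalIntegral.integral_comp_sub_left (a := (0:ℝ)) (b := θ * h)
        (fun s : ℝ => NormedSpace.exp (-(s • A))) (θ * h)
  have hW₂' : ∀ θ : ℝ, W₂ θ = (1 / (c₂ * h)) •
      ((θ * h) • (∫ s in (0:ℝ)..(θ * h), NormedSpace.exp (-(s • A))) -
        ∫ s in (0:ℝ)..(θ * h), s • NormedSpace.exp (-(s • A))) := by
    intro θ
    rw [hW₂]
    congr 1
    have h1 : (∫ σ in (0:ℝ)..(θ * h), σ • NormedSpace.exp (-((θ * h - σ) • A)))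
        = ∫ x in (0:ℝ)..(θ * h), (θ * h - x) • NormedSpace.exp (-(x • A)) := by
      simpa [sub_sub_cancel] using
        intervalIntegral.integral_comp_sub_left (a := (0:ℝ)) (b := θ * h)
          (fun x : ℝ => (θ * h - x) • NormedSpace.exp (-(x • A))) (θ * h)
    rw [h1]
    simp_rw [sub_smul]
    rw [intervalIntegral.integral_sub (f := fun x : ℝ => (θ * h) • NormedSpace.exp (-(x • A)))
      ((Continuous.smul (f := fun _ : ℝ => θ * h) continuous_const hexpo_cont).intervalIntegrable _ _) (hint2 _ _),
      intervalIntegral.integral_smul]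
  -- norm bound on W₂
  have hW₂norm : ∀ θ : ℝ, 0 ≤ θ → θ ≤ 1 → ‖W₂ θ‖ ≤ Cs * h / (2 * c₂) := by
    intro θ hθ0 hθ1
    have hr0 : (0:ℝ) ≤ θ * h := mul_nonneg hθ0 hh.le
    have hrh : θ * h ≤ h := by nlinarith
    have hae : ∀ᵐ t ∂(MeasureTheory.volume.restrict (Set.uIoc (0:ℝ) (θ * h))),
        ‖t • NormedSpace.exp (-((θ * h - t) • A))‖ ≤ Cs * t := by
      rw [MeasureTheory.ae_restrict_iff' measurableSet_uIoc]
      refine MeasureTheory.ae_of_all _ fun t ht => ?_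
      rw [Set.uIoc_of_le hr0] at ht
      have hb : ‖NormedSpace.exp (-((θ * h - t) • A))‖ ≤ Cs :=
        hCs_ub _ ⟨by linarith [ht.2], by linarith [ht.1]⟩
      calc ‖t • NormedSpace.exp (-((θ * h - t) • A))‖
          ≤ ‖t‖ * ‖NormedSpace.exp (-((θ * h - t) • A))‖ :=
            ContinuousLinearMap.opNorm_smul_le _ _
        _ = t * ‖NormedSpace.exp (-((θ * h - t) • A))‖ := by
            rw [Real.norm_eq_abs, abs_of_pos ht.1]
        _ ≤ t * Cs := mul_le_mul_of_nonneg_left hb ht.1.le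
        _ = Cs * t := mul_comm _ _
    have hgint : IntervalIntegrable (fun σ : ℝ => Cs * σ) MeasureTheory.volume 0 (θ * h) :=
      (continuous_const.mul continuous_id).intervalIntegrable _ _
    have hnb := intervalIntegral.norm_integral_le_abs_of_norm_le
      (μ := MeasureTheory.volume) (a := (0:ℝ)) (b := θ * h)
      (f := fun σ : ℝ => σ • NormedSpace.exp (-((θ * h - σ) • A)))
      (g := fun σ : ℝ => Cs * σ) hae hgint
    have hg : (∫ σ in (0:ℝ)..(θ * h), Cs * σ) = Cs * ((θ * h) ^ 2 / 2) := by
      rw [intervalIntegral.integral_const_mul, integral_id]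
      ring
    rw [hg, abs_of_nonneg (by positivity)] at hnb
    rw [hW₂ θ]
    have hsq : (θ * h) ^ 2 ≤ h ^ 2 := by nlinarith
    calc ‖(1 / (c₂ * h)) • ∫ σ in (0:ℝ)..(θ * h),
            σ • NormedSpace.exp (-((θ * h - σ) • A))‖
        ≤ ‖(1 / (c₂ * h))‖ * ‖∫ σ in (0:ℝ)..(θ * h),
            σ • NormedSpace.exp (-((θ * h - σ) • A))‖ :=
          ContinuousLinearMap.opNorm_smul_le _ _
      _ = (1 / (c₂ * h)) * ‖∫ σ in (0:ℝ)..(θ * h),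
            σ • NormedSpace.exp (-((θ * h - σ) • A))‖ := by
          rw [Real.norm_eq_abs, abs_of_pos (by positivity : (0:ℝ) < 1 / (c₂ * h))]
      _ ≤ (1 / (c₂ * h)) * (Cs * ((θ * h) ^ 2 / 2)) := by
          apply mul_le_mul_of_nonneg_left hnb (by positivity)
      _ ≤ (1 / (c₂ * h)) * (Cs * (h ^ 2 / 2)) := by
          apply mul_le_mul_of_nonneg_left _ (by positivity)
          apply mul_le_mul_of_nonneg_left _ hCs0
          linarith
      _ = Cs * h / (2 * c₂) := by field_simp
  -- the delayed time
  set tn2 : ℝ := tn + c₂ * h with htn2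
  set tstar : ℝ := tn2 - τ tn2 Un2 with htstar
  have htstar_le : tstar ≤ tn + h := by
    have := hτ_nonneg tn2 Un2
    rw [htstar, htn2]
    nlinarith
  set θs : ℝ := (tstar - tn) / h with hθs
  have htsθ : tn + θs * h = tstar := by
    rw [hθs]; field_simp; ring
  -- Lipschitz property in the third argument
  set L : ℝ := max Lf 0 with hL
  have hL0 : 0 ≤ L := le_max_right _ _
  have hf3 : ∀ w₁ w₂ : X, ‖f tn2 Un2 w₁ - f tn2 Un2 w₂‖ ≤ L * ‖w₁ - w₂‖ := by
    intro w₁ w₂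
    have h1 := hf tn2 tn2 Un2 Un2 w₁ w₂
    simp only [sub_self, abs_zero, norm_zero, zero_add, add_zero] at h1
    calc ‖f tn2 Un2 w₁ - f tn2 Un2 w₂‖ ≤ Lf * ‖w₁ - w₂‖ := h1
      _ ≤ L * ‖w₁ - w₂‖ := mul_le_mul_of_nonneg_right (le_max_left _ _) (norm_nonneg _)
  -- contraction constant
  set Kr : ℝ := L * (Cs * h / (2 * c₂)) with hKr
  have hKr0 : 0 ≤ Kr := mul_nonneg hL0 (by positivity)
  have hKr1 : Kr < 1 := by
    have hLCs : L * (Cs * h) < 2 * c₂ := by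
      rcases le_or_gt 0 Lf with hLf | hLf
      · rw [hL, max_eq_left hLf]; nlinarith
      · rw [hL, max_eq_right hLf.le]; nlinarith
    rw [hKr, ← mul_div_assoc]
    rw [div_lt_one (by positivity)]
    exact hLCs
  -- the fixed point map
  set Φ : X → X := fun x =>
    (NormedSpace.exp (-((θs * h) • A))) (U tn) + (W₁ θs - W₂ θs) G₁ +
      (W₂ θs) (f tn2 Un2 (if tstar ≤ tn then U tstar else x)) with hΦ
  have hΦlip : ∀ x y : X, ‖Φ x - Φ y‖ ≤ Kr * ‖x - y‖ := by
    intro x y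
    by_cases hc : tstar ≤ tn
    · simp only [hΦ, if_pos hc, sub_self, norm_zero]
      positivity
    · have hxy : Φ x - Φ y = (W₂ θs) (f tn2 Un2 x - f tn2 Un2 y) := by
        simp only [hΦ, if_neg hc, map_sub]
        abel
      rw [hxy]
      have hθs0 : 0 ≤ θs := by
        rw [hθs]
        apply div_nonneg _ hh.le
        linarith [not_le.1 hc]
      have hθs1 : θs ≤ 1 := by
        rw [hθs, div_le_one hh]
        linarith [htstar_le]
      calc ‖(W₂ θs) (f tn2 Un2 x - f tn2 Un2 y)‖
          ≤ ‖W₂ θs‖ * ‖f tn2 Un2 x - f tn2 Un2 y‖ := ContinuousLinearMap.le_opNorm _ _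
        _ ≤ (Cs * h / (2 * c₂)) * (L * ‖x - y‖) :=
            mul_le_mul (hW₂norm θs hθs0 hθs1) (hf3 x y) (norm_nonneg _) (by positivity)
        _ = Kr * ‖x - y‖ := by rw [hKr]; ring
  haveI : Nonempty X := ⟨0⟩
  have hcontr : ContractingWith Kr.toNNReal Φ := by
    constructor
    · rw [← NNReal.coe_lt_coe, Real.coe_toNNReal _ hKr0, NNReal.coe_one]
      exact hKr1
    · refine LipschitzWith.of_dist_le_mul fun x y => ?_
      rw [dist_eq_norm, dist_eq_norm, Real.coe_toNNReal _ hKr0]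
      exact hΦlip x y
  set z : X := ContractingWith.fixedPoint Φ hcontr with hzdef
  have hz : Φ z = z := hcontr.fixedPoint_isFixedPt
  -- the solution
  set Kv : X := f tn2 Un2 (if tstar ≤ tn then U tstar else z) with hKv
  set E : ℝ → X := fun θ =>
    (NormedSpace.exp (-((θ * h) • A))) (U tn) + (W₁ θ - W₂ θ) G₁ + (W₂ θ) Kv with hE
  set V : ℝ → X := fun t => E ((t - tn) / h) with hV
  have hEθs : E θs = z := by
    have h1 : E θs = Φ z := rfl
    rw [h1, hz]
  have hVts : V tstar = z := by
    have h1 : V tstar = E ((tstar - tn) / h) := rfl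
    rw [h1, ← hθs, hEθs]
  have hVt : ∀ θ : ℝ, V (tn + θ * h) = E θ := by
    intro θ
    show E ((tn + θ * h - tn) / h) = E θ
    congr 1
    field_simp; ring
  -- continuity
  have hPc : Continuous (fun r : ℝ => ∫ s in (0:ℝ)..r, NormedSpace.exp (-(s • A))) :=
    intervalIntegral.continuous_primitive hint1 0
  have hQc : Continuous (fun r : ℝ => ∫ s in (0:ℝ)..r, s • NormedSpace.exp (-(s • A))) :=
    intervalIntegral.continuous_primitive hint2 0
  have hmulh : Continuous (fun θ : ℝ => θ * h) := continuous_id.mul continuous_const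
  have hW₁c : Continuous (fun θ : ℝ => W₁ θ) := by
    simp only [hW₁']
    exact hPc.comp hmulh
  have hW₂c : Continuous (fun θ : ℝ => W₂ θ) := by
    simp only [hW₂']
    exact Continuous.smul (f := fun _ : ℝ => 1 / (c₂ * h)) continuous_const ((hmulh.smul (hPc.comp hmulh)).sub (hQc.comp hmulh))
  have hEc : Continuous E := by
    rw [hE]
    refine Continuous.add (Continuous.add ?_ ?_) ?_
    · exact (hexpo_cont.comp hmulh).clm_apply continuous_const
    · exact ((hW₁c.sub hW₂c).clm_apply continuous_const)
    · exact (hW₂c.clm_apply continuous_const)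
  have hVcont : Continuous V := by
    rw [hV]
    exact hEc.comp ((continuous_id.sub continuous_const).div_const h)
  refine ⟨V, ⟨hVcont.continuousOn, ?_, ?_⟩, ?_⟩
  · -- V tn = U tn
    have h1 : V tn = E 0 := by
      show E ((tn - tn) / h) = E 0
      congr 1
      simp
    rw [h1, hE]
    simp only [zero_mul, zero_smul, neg_zero, NormedSpace.exp_zero, hW₁ 0, hW₂ 0,
      intervalIntegral.integral_same, smul_zero, sub_zero, ContinuousLinearMap.zero_apply,
      add_zero, ContinuousLinearMap.one_apply]
  · -- the scheme
    intro θ hθ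
    rw [hVt θ]
    show E θ = _
    rw [hE]
    simp only []
    have harg : Kv = f tn2 Un2 (if tstar ≤ tn then U tstar else V tstar) := by
      rw [hKv]
      by_cases hc : tstar ≤ tn
      · simp [hc]
      · simp only [if_neg hc, hVts]
    rw [← harg]
  · -- uniqueness
    rintro V' ⟨hV'cont, hV'tn, hV'scheme⟩ t ht
    have hkey : f tn2 Un2 (if tstar ≤ tn then U tstar else V' tstar) = Kv := by
      rw [hKv]
      by_cases hc : tstar ≤ tn
      · simp [hc]
      · simp only [if_neg hc]
        have hθs0 : 0 ≤ θs := by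
          rw [hθs]
          apply div_nonneg _ hh.le
          linarith [not_le.1 hc]
        have hθs1 : θs ≤ 1 := by
          rw [hθs, div_le_one hh]
          linarith [htstar_le]
        have hs := hV'scheme θs ⟨hθs0, hθs1⟩
        rw [htsθ] at hs
        simp only [if_neg hc] at hs
        have hfix : Function.IsFixedPt Φ (V' tstar) := by
          show Φ (V' tstar) = V' tstar
          rw [hΦ]
          simp only [if_neg hc]
          exact hs.symm
        have h1 : V' tstar = z := hcontr.fixedPoint_unique hfix
        rw [h1]
    have hθt0 : 0 ≤ (t - tn) / h := div_nonneg (by linarith [ht.1]) hh.le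
    have hθt1 : (t - tn) / h ≤ 1 := by
      rw [div_le_one hh]
      linarith [ht.2]
    have htt : tn + (t - tn) / h * h = t := by field_simp; ring
    have hs := hV'scheme ((t - tn) / h) ⟨hθt0, hθt1⟩
    rw [htt] at hs
    rw [hs]
    show _ = E ((t - tn) / h)
    rw [hE]
    simp only []
    rw [hkey]
end

section
/- Let X be a real Banach space and A : X → X a bounded linear operator. Suppose f : ℝ × X × X → X satisfies ‖f(t₁,v₁,w₁) − f(t₂,v₂,w₂)‖ ≤ L_f·(|t₁ − t₂| + ‖v₁ − v₂‖ + ‖w₁ − w₂‖) for all arguments; τ : ℝ × X → ℝ is nonnegative and satisfies |τ(t₁,v₁) − τ(t₂,v₂)| ≤ L_τ·(|t₁ − t₂| + ‖v₁ − v₂‖) for all arguments; and φ : (−∞, 0] → X is Lipschitz continuous. Then there exist T > 0 and a function u : (−∞, T] → X such that: u(t) = φ(t) for all t ≤ 0; u is continuous on (−∞, T]; u is continuously differentiable on [0, T]; and u′(t) + A u(t) = f(t, u(t), u(t − τ(t, u(t)))) for all t ∈ [0, T]. Moreover, u is the unique function with these properties on (−∞, T]. -/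
open Set intervalIntegral MeasureTheory BoundedContinuousFunction
open scoped BoundedContinuousFunction
set_option maxHeartbeats 2000000

/-- A function satisfying a global Lipschitz-type norm bound is continuous. -/
private lemma lip_continuous' {X : Type*} [NormedAddCommGroup X] {M : ℝ} {u : ℝ → X}
    (h : ∀ s t : ℝ, ‖u s - u t‖ ≤ M * |s - t|) : Continuous u := by
  have h' : ∀ s t : ℝ, dist (u s) (u t) ≤ (⟨max M 0, le_max_right _ _⟩ : NNReal) * dist s t := by
    intro s t
    simp only [dist_eq_norm, Real.dist_eq, NNReal.coe_mk]
    exact (h s t).trans (mul_le_mul_of_nonneg_right (le_max_left _ _) (abs_nonneg _))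
  exact (LipschitzWith.of_dist_le_mul h').continuous

/-- Composition continuity for a Lipschitz function of three arguments. -/
private lemma cont_comp3 {X : Type*} [NormedAddCommGroup X]
    {K : ℝ} {f : ℝ → X → X → X}
    (hf : ∀ (t₁ t₂ : ℝ) (v₁ v₂ w₁ w₂ : X),
      ‖f t₁ v₁ w₁ - f t₂ v₂ w₂‖ ≤ K * (|t₁ - t₂| + ‖v₁ - v₂‖ + ‖w₁ - w₂‖))
    {α : ℝ → ℝ} {β γ : ℝ → X} (hα : Continuous α) (hβ : Continuous β) (hγ : Continuous γ) :
    Continuous fun s => f (α s) (β s) (γ s) := by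
  have hF : Continuous fun p : ℝ × X × X => f p.1 p.2.1 p.2.2 := by
    have h' : ∀ p q : ℝ × X × X, dist (f p.1 p.2.1 p.2.2) (f q.1 q.2.1 q.2.2)
        ≤ (⟨3 * max K 0, by positivity⟩ : NNReal) * dist p q := by
      intro p q
      have e1 : |p.1 - q.1| ≤ dist p q := by
        rw [← Real.dist_eq]
        exact le_trans (le_max_left _ _) (le_of_eq Prod.dist_eq.symm)
      have e2 : ‖p.2.1 - q.2.1‖ ≤ dist p q := by
        rw [← dist_eq_norm]
        calc dist p.2.1 q.2.1 ≤ dist p.2 q.2 := le_trans (le_max_left _ _) (le_of_eq Prod.dist_eq.symm)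
          _ ≤ dist p q := le_trans (le_max_right _ _) (le_of_eq Prod.dist_eq.symm)
      have e3 : ‖p.2.2 - q.2.2‖ ≤ dist p q := by
        rw [← dist_eq_norm]
        calc dist p.2.2 q.2.2 ≤ dist p.2 q.2 := le_trans (le_max_right _ _) (le_of_eq Prod.dist_eq.symm)
          _ ≤ dist p q := le_trans (le_max_right _ _) (le_of_eq Prod.dist_eq.symm)
      have hD : (0:ℝ) ≤ dist p q := dist_nonneg
      have h0 : ‖f p.1 p.2.1 p.2.2 - f q.1 q.2.1 q.2.2‖
          ≤ K * (|p.1 - q.1| + ‖p.2.1 - q.2.1‖ + ‖p.2.2 - q.2.2‖) := hf _ _ _ _ _ _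
      have h1 : K * (|p.1 - q.1| + ‖p.2.1 - q.2.1‖ + ‖p.2.2 - q.2.2‖)
          ≤ max K 0 * (|p.1 - q.1| + ‖p.2.1 - q.2.1‖ + ‖p.2.2 - q.2.2‖) :=
        mul_le_mul_of_nonneg_right (le_max_left _ _) (by positivity)
      have h2 : max K 0 * (|p.1 - q.1| + ‖p.2.1 - q.2.1‖ + ‖p.2.2 - q.2.2‖)
          ≤ max K 0 * (dist p q + dist p q + dist p q) :=
        mul_le_mul_of_nonneg_left (by linarith) (le_max_right _ _)
      rw [dist_eq_norm]
      show _ ≤ 3 * max K 0 * dist p q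
      nlinarith [le_max_right K 0]
    exact (LipschitzWith.of_dist_le_mul h').continuous
  exact hF.comp (hα.prodMk (hβ.prodMk hγ))

/-- Composition continuity for a Lipschitz function of two arguments. -/
private lemma cont_comp2 {X : Type*} [NormedAddCommGroup X]
    {K : ℝ} {τ : ℝ → X → ℝ}
    (hτ : ∀ (t₁ t₂ : ℝ) (v₁ v₂ : X), |τ t₁ v₁ - τ t₂ v₂| ≤ K * (|t₁ - t₂| + ‖v₁ - v₂‖))
    {α : ℝ → ℝ} {β : ℝ → X} (hα : Continuous α) (hβ : Continuous β) :
    Continuous fun s => τ (α s) (β s) := by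
  have hF : Continuous fun p : ℝ × X => τ p.1 p.2 := by
    have h' : ∀ p q : ℝ × X, dist (τ p.1 p.2) (τ q.1 q.2)
        ≤ (⟨2 * max K 0, by positivity⟩ : NNReal) * dist p q := by
      intro p q
      have e1 : |p.1 - q.1| ≤ dist p q := by
        rw [← Real.dist_eq]
        exact le_trans (le_max_left _ _) (le_of_eq Prod.dist_eq.symm)
      have e2 : ‖p.2 - q.2‖ ≤ dist p q := by
        rw [← dist_eq_norm]
        exact le_trans (le_max_right _ _) (le_of_eq Prod.dist_eq.symm)
      have hD : (0:ℝ) ≤ dist p q := dist_nonneg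
      have h0 : |τ p.1 p.2 - τ q.1 q.2| ≤ K * (|p.1 - q.1| + ‖p.2 - q.2‖) := hτ _ _ _ _
      have h1 : K * (|p.1 - q.1| + ‖p.2 - q.2‖) ≤ max K 0 * (|p.1 - q.1| + ‖p.2 - q.2‖) :=
        mul_le_mul_of_nonneg_right (le_max_left _ _) (by positivity)
      have h2 : max K 0 * (|p.1 - q.1| + ‖p.2 - q.2‖) ≤ max K 0 * (dist p q + dist p q) :=
        mul_le_mul_of_nonneg_left (by linarith) (le_max_right _ _)
      rw [Real.dist_eq]
      show _ ≤ 2 * max K 0 * dist p q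
      nlinarith [le_max_right K 0]
    exact (LipschitzWith.of_dist_le_mul h').continuous
  exact hF.comp (hα.prodMk hβ)

/-- Local well-posedness of the initial value problem
`u′(t) + A u(t) = f(t, u(t), u(t − τ(t, u(t))))`, `u = φ` on `(−∞, 0]`, for a
bounded operator `A`, Lipschitz continuous `f` and `τ ≥ 0`, and Lipschitz
continuous history `φ`: there exist `T > 0` and a unique solution `u` which
coincides with `φ` on `(−∞, 0]`, is continuous on `(−∞, T]` and continuously
differentiable on `[0, T]`, and satisfies the equation on `[0, T]`. -/
theorem delay_problem_wellposed
    (X : Type*) [NormedAddCommGroup X] [NormedSpace ℝ X] [CompleteSpace X]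
    (A : X →L[ℝ] X) (Lf Lτ Lφ : ℝ)
    (f : ℝ → X → X → X) (τ : ℝ → X → ℝ) (φ : ℝ → X)
    (hf : ∀ (t₁ t₂ : ℝ) (v₁ v₂ w₁ w₂ : X),
      ‖f t₁ v₁ w₁ - f t₂ v₂ w₂‖ ≤ Lf * (|t₁ - t₂| + ‖v₁ - v₂‖ + ‖w₁ - w₂‖))
    (hτ_nonneg : ∀ (t : ℝ) (v : X), 0 ≤ τ t v)
    (hτ : ∀ (t₁ t₂ : ℝ) (v₁ v₂ : X),
      |τ t₁ v₁ - τ t₂ v₂| ≤ Lτ * (|t₁ - t₂| + ‖v₁ - v₂‖))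
    (hφ : ∀ a b : ℝ, a ≤ 0 → b ≤ 0 → ‖φ a - φ b‖ ≤ Lφ * |a - b|) :
    ∃ T > (0:ℝ), ∃ u : ℝ → X,
      ((∀ t : ℝ, t ≤ 0 → u t = φ t) ∧
        ContinuousOn u (Set.Iic T) ∧
        ContinuousOn (fun t : ℝ =>
          f t (u t) (u (t - τ t (u t))) - A (u t)) (Set.Icc 0 T) ∧
        ∀ t ∈ Set.Icc (0:ℝ) T,
          HasDerivWithinAt u
            (f t (u t) (u (t - τ t (u t))) - A (u t)) (Set.Icc (0:ℝ) T) t) ∧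
      ∀ v : ℝ → X,
        ((∀ t : ℝ, t ≤ 0 → v t = φ t) ∧
          ContinuousOn v (Set.Iic T) ∧
          ContinuousOn (fun t : ℝ =>
            f t (v t) (v (t - τ t (v t))) - A (v t)) (Set.Icc 0 T) ∧
          ∀ t ∈ Set.Icc (0:ℝ) T,
            HasDerivWithinAt v
              (f t (v t) (v (t - τ t (v t))) - A (v t)) (Set.Icc (0:ℝ) T) t) →
        ∀ t : ℝ, t ≤ T → v t = u t := by
  classical
  -- Replace the Lipschitz constants by nonnegative ones.
  obtain ⟨K, hK, hfK⟩ : ∃ K : ℝ, 0 ≤ K ∧ ∀ (t₁ t₂ : ℝ) (v₁ v₂ w₁ w₂ : X),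
      ‖f t₁ v₁ w₁ - f t₂ v₂ w₂‖ ≤ K * (|t₁ - t₂| + ‖v₁ - v₂‖ + ‖w₁ - w₂‖) :=
    ⟨max Lf 0, le_max_right _ _, fun t₁ t₂ v₁ v₂ w₁ w₂ =>
      (hf t₁ t₂ v₁ v₂ w₁ w₂).trans (mul_le_mul_of_nonneg_right (le_max_left _ _) (by positivity))⟩
  obtain ⟨Lt, hLt, hτK⟩ : ∃ Lt : ℝ, 0 ≤ Lt ∧ ∀ (t₁ t₂ : ℝ) (v₁ v₂ : X),
      |τ t₁ v₁ - τ t₂ v₂| ≤ Lt * (|t₁ - t₂| + ‖v₁ - v₂‖) :=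
    ⟨max Lτ 0, le_max_right _ _, fun t₁ t₂ v₁ v₂ =>
      (hτ t₁ t₂ v₁ v₂).trans (mul_le_mul_of_nonneg_right (le_max_left _ _) (by positivity))⟩
  obtain ⟨Lp, hLp, hφK⟩ : ∃ Lp : ℝ, 0 ≤ Lp ∧ ∀ a b : ℝ, a ≤ 0 → b ≤ 0 →
      ‖φ a - φ b‖ ≤ Lp * |a - b| :=
    ⟨max Lφ 0, le_max_right _ _, fun a b ha hb =>
      (hφ a b ha hb).trans (mul_le_mul_of_nonneg_right (le_max_left _ _) (abs_nonneg _))⟩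
  have hτ0 : 0 ≤ τ 0 (φ 0) := hτ_nonneg _ _
  -- Constants.
  set τm : ℝ := τ 0 (φ 0) + 2 * Lt with hτmdef
  have hτm : 0 ≤ τm := by rw [hτmdef]; linarith
  set M₁ : ℝ := ‖f 0 (φ 0) (φ 0)‖ + K * (3 + Lp * τm) + ‖A‖ * (‖φ 0‖ + 1) with hM₁def
  have hM₁ : 0 ≤ M₁ := by
    rw [hM₁def]
    have h1 : 0 ≤ K * (3 + Lp * τm) := mul_nonneg hK (by nlinarith)
    have h2 : 0 ≤ ‖A‖ * (‖φ 0‖ + 1) :=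
      mul_nonneg (norm_nonneg _) (by linarith [norm_nonneg (φ 0)])
    linarith [norm_nonneg (f 0 (φ 0) (φ 0))]
  set M : ℝ := M₁ + Lp + 1 with hMdef
  have hM0 : 0 < M := by rw [hMdef]; linarith
  have hLpM : Lp ≤ M := by rw [hMdef]; linarith
  have hM₁M : M₁ ≤ M := by rw [hMdef]; linarith
  set C₂ : ℝ := ‖A‖ + K * (2 + M * Lt) with hC₂def
  have hC₂ : 0 ≤ C₂ := by
    rw [hC₂def]
    have : 0 ≤ K * (2 + M * Lt) := mul_nonneg hK (by nlinarith)
    linarith [norm_nonneg A]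
  set T : ℝ := min 1 (min (1/M) (1/(2*C₂+1))) with hTdef
  have hT : 0 < T := by
    rw [hTdef]
    exact lt_min one_pos (lt_min (by positivity) (by positivity))
  have hT1 : T ≤ 1 := by rw [hTdef]; exact min_le_left _ _
  have hMT : M * T ≤ 1 := by
    have h1 : T ≤ 1/M := by
      rw [hTdef]; exact le_trans (min_le_right _ _) (min_le_left _ _)
    calc M * T ≤ M * (1/M) := mul_le_mul_of_nonneg_left h1 hM0.le
      _ = 1 := by field_simp
  have hCT : C₂ * T ≤ 1/2 := by
    have h1 : T ≤ 1/(2*C₂+1) := by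
      rw [hTdef]; exact le_trans (min_le_right _ _) (min_le_right _ _)
    have h2 : (0:ℝ) < 2*C₂+1 := by linarith
    have h3 : C₂ * T ≤ C₂ * (1/(2*C₂+1)) := mul_le_mul_of_nonneg_left h1 hC₂
    have h4 : C₂ * (1/(2*C₂+1)) ≤ 1/2 := by
      rw [mul_one_div, div_le_iff₀ h2]; linarith
    linarith
  -- The clamp function onto `[0, T]`.
  set c : ℝ → ℝ := fun t => max 0 (min t T) with hcdef
  have hc0 : ∀ t, 0 ≤ c t := fun t => le_max_left _ _
  have hcT : ∀ t, c t ≤ T := fun t => max_le hT.le (min_le_right _ _)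
  have hcid : ∀ t ∈ Set.Icc (0:ℝ) T, c t = t := by
    intro t ht
    simp only [hcdef]
    rw [min_eq_left ht.2, max_eq_right ht.1]
  have hcneg : ∀ t ≤ (0:ℝ), c t = 0 := by
    intro t ht
    simp only [hcdef]
    rw [max_eq_left (le_trans (min_le_left _ _) ht)]
  have hclip : ∀ t₁ t₂ : ℝ, |c t₁ - c t₂| ≤ |t₁ - t₂| := by
    intro t₁ t₂
    simp only [hcdef]
    rw [max_comm 0 (min t₁ T), max_comm 0 (min t₂ T)]
    refine (abs_max_sub_max_le_abs _ _ _).trans ?_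
    refine (abs_min_sub_min_le_max t₁ T t₂ T).trans ?_
    simp [abs_nonneg]
  -- The extension operator and the right-hand side.
  set E : (ℝ →ᵇ X) → ℝ → X := fun h t => if t ≤ 0 then φ t else h t with hEdef
  set g : (ℝ → X) → ℝ → X := fun u s => f s (u s) (u (s - τ s (u s))) - A (u s) with hgdef
  -- A priori bound on the right-hand side (Lemma A).
  have lemA : ∀ u : ℝ → X, (∀ t ≤ (0:ℝ), u t = φ t) →
      (∀ s t : ℝ, ‖u s - u t‖ ≤ M * |s - t|) →
      ∀ s ∈ Set.Icc (0:ℝ) T, ‖g u s‖ ≤ M₁ := by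
    intro u hu1 hu2 s hs
    have hu0 : u 0 = φ 0 := hu1 0 le_rfl
    obtain ⟨hs0, hsT⟩ := hs
    have hs1 : |s - 0| ≤ 1 := by
      rw [sub_zero, abs_of_nonneg hs0]; linarith
    have h1 : ‖u s - φ 0‖ ≤ 1 := by
      calc ‖u s - φ 0‖ = ‖u s - u 0‖ := by rw [hu0]
        _ ≤ M * |s - 0| := hu2 s 0
        _ ≤ M * T := by
            rw [sub_zero, abs_of_nonneg hs0]
            exact mul_le_mul_of_nonneg_left hsT hM0.le
        _ ≤ 1 := hMT
    have hτs : τ s (u s) ≤ τm := by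
      have h2 := hτK s 0 (u s) (φ 0)
      have h3 : Lt * (|s - 0| + ‖u s - φ 0‖) ≤ Lt * 2 :=
        mul_le_mul_of_nonneg_left (by linarith) hLt
      have h4 := le_abs_self (τ s (u s) - τ 0 (φ 0))
      rw [hτmdef]; linarith
    set a : ℝ := s - τ s (u s) with hadef
    have haT : a ≤ T := by
      have := hτ_nonneg s (u s)
      rw [hadef]; linarith
    have h4 : ‖u a - φ 0‖ ≤ 1 + Lp * τm := by
      rcases le_or_gt a 0 with ha | ha
      · rw [hu1 a ha]
        have h5 : ‖φ a - φ 0‖ ≤ Lp * |a - 0| := hφK a 0 ha le_rfl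
        have h6 : |a - 0| ≤ τm := by
          rw [sub_zero, abs_of_nonpos ha, hadef]
          have := hτ_nonneg s (u s)
          linarith
        have h7 : Lp * |a - 0| ≤ Lp * τm := mul_le_mul_of_nonneg_left h6 hLp
        linarith
      · have h8 : ‖u a - φ 0‖ ≤ 1 := by
          calc ‖u a - φ 0‖ = ‖u a - u 0‖ := by rw [hu0]
            _ ≤ M * |a - 0| := hu2 a 0
            _ ≤ M * T := by
                rw [sub_zero, abs_of_nonneg ha.le]
                exact mul_le_mul_of_nonneg_left haT hM0.le
            _ ≤ 1 := hMT
        have : 0 ≤ Lp * τm := mul_nonneg hLp hτm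
        linarith
    have h7 : ‖f s (u s) (u a) - f 0 (φ 0) (φ 0)‖ ≤ K * (3 + Lp * τm) := by
      refine (hfK s 0 (u s) (φ 0) (u a) (φ 0)).trans ?_
      exact mul_le_mul_of_nonneg_left (by linarith) hK
    have h8 : ‖A (u s)‖ ≤ ‖A‖ * (‖φ 0‖ + 1) := by
      refine (A.le_opNorm _).trans ?_
      have h9 : ‖u s‖ - ‖φ 0‖ ≤ ‖u s - φ 0‖ := norm_sub_norm_le _ _
      exact mul_le_mul_of_nonneg_left (by linarith) (norm_nonneg A)
    have h10 : ‖f s (u s) (u a)‖ - ‖f 0 (φ 0) (φ 0)‖ ≤ ‖f s (u s) (u a) - f 0 (φ 0) (φ 0)‖ :=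
      norm_sub_norm_le _ _
    have h11 : ‖g u s‖ ≤ ‖f s (u s) (u a)‖ + ‖A (u s)‖ := by
      simp only [hgdef, ← hadef]
      exact norm_sub_le _ _
    rw [hM₁def]
    linarith
  -- Contraction-type estimate on the right-hand side (Lemma B).
  have lemB : ∀ (u v : ℝ → X) (d : ℝ), (∀ t ≤ (0:ℝ), u t = φ t) → (∀ t ≤ (0:ℝ), v t = φ t) →
      (∀ s t : ℝ, ‖u s - u t‖ ≤ M * |s - t|) → 0 ≤ d →
      (∀ r ∈ Set.Icc (0:ℝ) T, ‖u r - v r‖ ≤ d) →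
      ∀ s ∈ Set.Icc (0:ℝ) T, ‖g u s - g v s‖ ≤ C₂ * d := by
    intro u v d hu1 hv1 hu2 hd hud s hs
    have husvs : ‖u s - v s‖ ≤ d := hud s hs
    set au : ℝ := s - τ s (u s) with haudef
    set av : ℝ := s - τ s (v s) with havdef
    have h1 : ‖u au - u av‖ ≤ M * (Lt * d) := by
      have h2 := hu2 au av
      have h3 : |au - av| = |τ s (v s) - τ s (u s)| := by
        rw [haudef, havdef]
        congr 1; ring
      have h4 := hτK s s (v s) (u s)
      have h5 : |s - s| = 0 := by simp
      rw [h5] at h4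
      have h6 : ‖v s - u s‖ = ‖u s - v s‖ := norm_sub_rev _ _
      have h7 : |au - av| ≤ Lt * d := by
        rw [h3]
        calc |τ s (v s) - τ s (u s)| ≤ Lt * (0 + ‖v s - u s‖) := h4
          _ = Lt * ‖u s - v s‖ := by rw [h6]; ring
          _ ≤ Lt * d := mul_le_mul_of_nonneg_left husvs hLt
      calc ‖u au - u av‖ ≤ M * |au - av| := h2
        _ ≤ M * (Lt * d) := mul_le_mul_of_nonneg_left h7 hM0.le
    have h5 : ‖u av - v av‖ ≤ d := by
      rcases le_or_gt av 0 with h | h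
      · rw [hu1 av h, hv1 av h]; simpa using hd
      · refine hud av ⟨h.le, ?_⟩
        have := hτ_nonneg s (v s)
        rw [havdef]; linarith [hs.2]
    have h6 : ‖u au - v av‖ ≤ M * Lt * d + d := by
      have e : u au - v av = (u au - u av) + (u av - v av) := by abel
      calc ‖u au - v av‖ ≤ ‖u au - u av‖ + ‖u av - v av‖ := by rw [e]; exact norm_add_le _ _
        _ ≤ M * Lt * d + d := by rw [mul_assoc]; linarith
    have h7 : ‖f s (u s) (u au) - f s (v s) (v av)‖ ≤ K * ((2 + M * Lt) * d) := by
      refine (hfK s s (u s) (v s) (u au) (v av)).trans ?_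
      have h8 : |s - s| = 0 := by simp
      refine mul_le_mul_of_nonneg_left ?_ hK
      rw [h8]; nlinarith
    have h8 : ‖A (u s) - A (v s)‖ ≤ ‖A‖ * d := by
      rw [← map_sub]
      exact (A.le_opNorm _).trans (mul_le_mul_of_nonneg_left husvs (norm_nonneg A))
    have h9 : g u s - g v s = (f s (u s) (u au) - f s (v s) (v av)) - (A (u s) - A (v s)) := by
      simp only [hgdef, ← haudef, ← havdef]
      abel
    have h10 : ‖g u s - g v s‖ ≤ ‖f s (u s) (u au) - f s (v s) (v av)‖ + ‖A (u s) - A (v s)‖ := by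
      rw [h9]; exact norm_sub_le _ _
    rw [hC₂def]
    have h11 : (‖A‖ + K * (2 + M * Lt)) * d = ‖A‖ * d + K * ((2 + M * Lt) * d) := by ring
    linarith
  -- Continuity of the right-hand side.
  have lemCont : ∀ u : ℝ → X, Continuous u → Continuous (g u) := by
    intro u hu
    simp only [hgdef]
    have hτc : Continuous fun s => τ s (u s) := cont_comp2 hτK continuous_id hu
    exact (cont_comp3 hfK continuous_id hu (hu.comp (continuous_id.sub hτc))).sub
      (A.continuous.comp hu)
  -- The complete space of candidate functions.
  set S : Set (ℝ →ᵇ X) :=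
    {h | (∀ t ≤ (0:ℝ), h t = φ 0) ∧ ∀ s t : ℝ, ‖h s - h t‖ ≤ M * |s - t|} with hSdef
  have hSclosed : IsClosed S := by
    have h1 : IsClosed {h : ℝ →ᵇ X | ∀ t ≤ (0:ℝ), h t = φ 0} := by
      have e : {h : ℝ →ᵇ X | ∀ t ≤ (0:ℝ), h t = φ 0}
          = ⋂ (t : ℝ) (_ : t ≤ 0), {h : ℝ →ᵇ X | h t = φ 0} := by
        ext h; simp [Set.mem_iInter]
      rw [e]
      exact isClosed_iInter fun t => isClosed_iInter fun _ =>
        isClosed_eq (continuous_eval_const _) continuous_const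
    have h2 : IsClosed {h : ℝ →ᵇ X | ∀ s t : ℝ, ‖h s - h t‖ ≤ M * |s - t|} := by
      have e : {h : ℝ →ᵇ X | ∀ s t : ℝ, ‖h s - h t‖ ≤ M * |s - t|}
          = ⋂ (s : ℝ) (t : ℝ), {h : ℝ →ᵇ X | ‖h s - h t‖ ≤ M * |s - t|} := by
        ext h; simp [Set.mem_iInter]
      rw [e]
      exact isClosed_iInter fun s => isClosed_iInter fun t =>
        isClosed_le (((continuous_eval_const _).sub
          (continuous_eval_const _)).norm) continuous_const
    have e : S = {h : ℝ →ᵇ X | ∀ t ≤ (0:ℝ), h t = φ 0}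
        ∩ {h : ℝ →ᵇ X | ∀ s t : ℝ, ‖h s - h t‖ ≤ M * |s - t|} := by
      rw [hSdef]; rfl
    rw [e]
    exact h1.inter h2
  have hconst : BoundedContinuousFunction.const ℝ (φ 0) ∈ S := by
    refine ⟨?_, ?_⟩
    · intro t _; rfl
    · intro s t
      simp only [BoundedContinuousFunction.const_apply, sub_self, norm_zero]
      positivity
  haveI : Nonempty ↥S := ⟨⟨_, hconst⟩⟩
  haveI : CompleteSpace ↥S := hSclosed.completeSpace_coe
  -- Properties of the extension.
  have hE1 : ∀ h : ℝ →ᵇ X, ∀ t ≤ (0:ℝ), E h t = φ t := by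
    intro h t ht
    simp only [hEdef]
    rw [if_pos ht]
  have hE2 : ∀ h ∈ S, ∀ s t : ℝ, ‖E h s - E h t‖ ≤ M * |s - t| := by
    intro h hh s t
    rw [hSdef] at hh
    obtain ⟨hh1, hh2⟩ := hh
    have h00 : (h : ℝ → X) 0 = φ 0 := hh1 0 le_rfl
    have key : ∀ p q : ℝ, p ≤ 0 → 0 < q → ‖φ p - h q‖ ≤ M * |p - q| := by
      intro p q hp hq
      have e1 : ‖φ p - φ 0‖ ≤ Lp * |p - 0| := hφK p 0 hp le_rfl
      have e2 : ‖(h : ℝ → X) 0 - h q‖ ≤ M * |0 - q| := hh2 0 q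
      have tri : ‖φ p - h q‖ ≤ ‖φ p - φ 0‖ + ‖(h : ℝ → X) 0 - h q‖ := by
        have e : φ p - h q = (φ p - φ 0) + ((h : ℝ → X) 0 - h q) := by rw [h00]; abel
        rw [e]; exact norm_add_le _ _
      have a1 : |p - 0| = -p := by rw [sub_zero, abs_of_nonpos hp]
      have a2 : |0 - q| = q := by rw [zero_sub, abs_neg, abs_of_pos hq]
      have a3 : |p - q| = q - p := by rw [abs_of_nonpos (by linarith), neg_sub]
      rw [a1] at e1; rw [a2] at e2; rw [a3]
      have hint : Lp * (-p) ≤ M * (-p) :=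
        mul_le_mul_of_nonneg_right hLpM (by linarith)
      have expand : M * (q - p) = M * q + M * (-p) := by ring
      rw [expand]
      linarith
    rcases le_or_gt s 0 with hs | hs <;> rcases le_or_gt t 0 with ht | ht
    · simp only [hEdef]
      rw [if_pos hs, if_pos ht]
      exact (hφK s t hs ht).trans (mul_le_mul_of_nonneg_right hLpM (abs_nonneg _))
    · simp only [hEdef]
      rw [if_pos hs, if_neg (not_le.mpr ht)]
      exact key s t hs ht
    · simp only [hEdef]
      rw [if_neg (not_le.mpr hs), if_pos ht]
      rw [norm_sub_rev, abs_sub_comm]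
      exact key t s ht hs
    · simp only [hEdef]
      rw [if_neg (not_le.mpr hs), if_neg (not_le.mpr ht)]
      exact hh2 s t
  have hEc : ∀ h ∈ S, Continuous (E h) := fun h hh => lip_continuous' (hE2 h hh)
  have hgc : ∀ h ∈ S, Continuous (g (E h)) := fun h hh => lemCont _ (hEc h hh)
  have hgb : ∀ h ∈ S, ∀ s ∈ Set.Icc (0:ℝ) T, ‖g (E h) s‖ ≤ M₁ :=
    fun h hh => lemA _ (hE1 h) (hE2 h hh)
  -- Lipschitz estimate for the Picard integral map.
  have hIlip : ∀ h ∈ S, ∀ t₁ t₂ : ℝ,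
      ‖(φ 0 + ∫ s in (0:ℝ)..(c t₁), g (E h) s) - (φ 0 + ∫ s in (0:ℝ)..(c t₂), g (E h) s)‖
        ≤ M₁ * |t₁ - t₂| := by
    intro h hh t₁ t₂
    have hint : ∀ a b : ℝ, IntervalIntegrable (g (E h)) volume a b :=
      fun a b => (hgc h hh).intervalIntegrable _ _
    have e1 : (φ 0 + ∫ s in (0:ℝ)..(c t₁), g (E h) s)
        - (φ 0 + ∫ s in (0:ℝ)..(c t₂), g (E h) s) = ∫ s in (c t₂)..(c t₁), g (E h) s := by
      rw [← intervalIntegral.integral_interval_sub_left (hint 0 (c t₁)) (hint 0 (c t₂))]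
      abel
    rw [e1]
    have e2 : ∀ x ∈ Set.uIoc (c t₂) (c t₁), ‖g (E h) x‖ ≤ M₁ := by
      intro x hx
      refine hgb h hh x ⟨?_, ?_⟩
      · exact le_of_lt (lt_of_le_of_lt (le_min (hc0 t₂) (hc0 t₁)) hx.1)
      · exact le_trans hx.2 (max_le (hcT t₂) (hcT t₁))
    calc ‖∫ s in (c t₂)..(c t₁), g (E h) s‖ ≤ M₁ * |c t₁ - c t₂| :=
          intervalIntegral.norm_integral_le_of_norm_le_const e2
      _ ≤ M₁ * |t₁ - t₂| := mul_le_mul_of_nonneg_left (hclip t₁ t₂) hM₁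
  have hIbd : ∀ h ∈ S, ∀ t : ℝ,
      ‖φ 0 + ∫ s in (0:ℝ)..(c t), g (E h) s‖ ≤ ‖φ 0‖ + M₁ * T := by
    intro h hh t
    have e2 : ∀ x ∈ Set.uIoc (0:ℝ) (c t), ‖g (E h) x‖ ≤ M₁ := by
      intro x hx
      refine hgb h hh x ⟨?_, ?_⟩
      · exact le_of_lt (lt_of_le_of_lt (le_min le_rfl (hc0 t)) hx.1)
      · exact le_trans hx.2 (max_le hT.le (hcT t))
    have e3 := intervalIntegral.norm_integral_le_of_norm_le_const e2
    have e4 : |c t - 0| ≤ T := by rw [sub_zero, abs_of_nonneg (hc0 t)]; exact hcT t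
    have e5 : M₁ * |c t - 0| ≤ M₁ * T := mul_le_mul_of_nonneg_left e4 hM₁
    calc ‖φ 0 + ∫ s in (0:ℝ)..(c t), g (E h) s‖
        ≤ ‖φ 0‖ + ‖∫ s in (0:ℝ)..(c t), g (E h) s‖ := norm_add_le _ _
      _ ≤ ‖φ 0‖ + M₁ * T := by linarith
  have hIcont : ∀ (h : ℝ →ᵇ X) (hh : h ∈ S),
      Continuous fun t => φ 0 + ∫ s in (0:ℝ)..(c t), g (E h) s :=
    fun h hh => lip_continuous' (M := M₁) (hIlip h hh)
  -- The Picard operator.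
  have hPmem : ∀ h : ↥S,
      (BoundedContinuousFunction.ofNormedAddCommGroup
        (fun t => φ 0 + ∫ s in (0:ℝ)..(c t), g (E ↑h) s) (hIcont ↑h h.2)
        (‖φ 0‖ + M₁ * T) (hIbd ↑h h.2)) ∈ S := by
    intro h
    refine ⟨?_, ?_⟩
    · intro t ht
      show (φ 0 + ∫ s in (0:ℝ)..(c t), g (E ↑h) s) = φ 0
      rw [hcneg t ht, intervalIntegral.integral_same, add_zero]
    · intro s t
      show ‖(φ 0 + ∫ x in (0:ℝ)..(c s), g (E ↑h) x)
          - (φ 0 + ∫ x in (0:ℝ)..(c t), g (E ↑h) x)‖ ≤ M * |s - t|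
      exact (hIlip ↑h h.2 s t).trans (mul_le_mul_of_nonneg_right hM₁M (abs_nonneg _))
  set P : ↥S → ↥S := fun h =>
    ⟨BoundedContinuousFunction.ofNormedAddCommGroup
      (fun t => φ 0 + ∫ s in (0:ℝ)..(c t), g (E ↑h) s) (hIcont ↑h h.2)
      (‖φ 0‖ + M₁ * T) (hIbd ↑h h.2), hPmem h⟩ with hPdef
  have hPcoe : ∀ (h : ↥S) (t : ℝ),
      ((P h : ℝ →ᵇ X) t) = φ 0 + ∫ s in (0:ℝ)..(c t), g (E ↑h) s := by
    intro h t; rw [hPdef]; rfl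
  -- `P` is a contraction.
  have hPdist : ∀ h₁ h₂ : ↥S, dist (P h₁) (P h₂) ≤ (1/2 : ℝ) * dist h₁ h₂ := by
    intro h₁ h₂
    have hd : 0 ≤ dist h₁ h₂ := dist_nonneg
    rw [Subtype.dist_eq, BoundedContinuousFunction.dist_le (by positivity)]
    intro t
    rw [dist_eq_norm, hPcoe h₁ t, hPcoe h₂ t]
    have hub : ∀ r ∈ Set.Icc (0:ℝ) T, ‖E ↑h₁ r - E ↑h₂ r‖ ≤ dist h₁ h₂ := by
      intro r hr
      rcases le_or_gt r 0 with h | h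
      · rw [hE1 _ r h, hE1 _ r h]; simpa using hd
      · simp only [hEdef]
        rw [if_neg (not_le.mpr h), if_neg (not_le.mpr h)]
        have e := BoundedContinuousFunction.dist_coe_le_dist
          (f := (h₁ : ℝ →ᵇ X)) (g := (h₂ : ℝ →ᵇ X)) r
        rw [dist_eq_norm] at e
        rw [Subtype.dist_eq]
        exact e
    have hB := lemB (E ↑h₁) (E ↑h₂) (dist h₁ h₂) (hE1 _) (hE1 _) (hE2 _ h₁.2) hd hub
    have hint₁ : IntervalIntegrable (g (E ↑h₁)) volume 0 (c t) :=
      (hgc _ h₁.2).intervalIntegrable _ _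
    have hint₂ : IntervalIntegrable (g (E ↑h₂)) volume 0 (c t) :=
      (hgc _ h₂.2).intervalIntegrable _ _
    have e1 : (φ 0 + ∫ s in (0:ℝ)..(c t), g (E ↑h₁) s)
        - (φ 0 + ∫ s in (0:ℝ)..(c t), g (E ↑h₂) s)
        = ∫ s in (0:ℝ)..(c t), (g (E ↑h₁) s - g (E ↑h₂) s) := by
      rw [intervalIntegral.integral_sub hint₁ hint₂]
      abel
    rw [e1]
    have e2 : ∀ x ∈ Set.uIoc (0:ℝ) (c t), ‖g (E ↑h₁) x - g (E ↑h₂) x‖ ≤ C₂ * dist h₁ h₂ := by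
      intro x hx
      refine hB x ⟨?_, ?_⟩
      · exact le_of_lt (lt_of_le_of_lt (le_min le_rfl (hc0 t)) hx.1)
      · exact le_trans hx.2 (max_le hT.le (hcT t))
    have e4 : |c t - 0| ≤ T := by rw [sub_zero, abs_of_nonneg (hc0 t)]; exact hcT t
    calc ‖∫ s in (0:ℝ)..(c t), (g (E ↑h₁) s - g (E ↑h₂) s)‖
        ≤ (C₂ * dist h₁ h₂) * |c t - 0| :=
          intervalIntegral.norm_integral_le_of_norm_le_const e2
      _ ≤ (C₂ * dist h₁ h₂) * T :=
          mul_le_mul_of_nonneg_left e4 (mul_nonneg hC₂ hd)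
      _ ≤ (1/2 : ℝ) * dist h₁ h₂ := by nlinarith
  have hcontr : ContractingWith (1/2 : NNReal) P := by
    constructor
    · rw [← NNReal.coe_lt_coe]; norm_num
    · refine LipschitzWith.of_dist_le_mul fun x y => ?_
      have := hPdist x y
      have e : ((1/2 : NNReal) : ℝ) = (1/2 : ℝ) := by norm_num
      rw [e]
      exact this
  set h₀ : ↥S := ContractingWith.fixedPoint P hcontr with hh₀def
  have hfix : P h₀ = h₀ := hcontr.fixedPoint_isFixedPt
  have hfixcoe : ∀ t : ℝ, ((h₀ : ℝ →ᵇ X) t) = φ 0 + ∫ s in (0:ℝ)..(c t), g (E ↑h₀) s := by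
    intro t
    conv_lhs => rw [← hfix]
    exact hPcoe h₀ t
  -- The solution.
  set u : ℝ → X := E ↑h₀ with hudef
  have hu1 : ∀ t ≤ (0:ℝ), u t = φ t := hE1 _
  have hu2 : ∀ s t : ℝ, ‖u s - u t‖ ≤ M * |s - t| := hE2 _ h₀.2
  have huc : Continuous u := lip_continuous' hu2
  have hgcu : Continuous (g u) := lemCont u huc
  have huInt : ∀ t ∈ Set.Icc (0:ℝ) T, u t = φ 0 + ∫ s in (0:ℝ)..t, g u s := by
    intro t ht
    rcases eq_or_lt_of_le ht.1 with h | h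
    · rw [← h, intervalIntegral.integral_same, add_zero]
      exact hu1 0 le_rfl
    · have e : u t = (h₀ : ℝ →ᵇ X) t := by
        rw [hudef]
        simp only [hEdef]
        rw [if_neg (not_le.mpr h)]
      rw [e, hfixcoe t, hcid t ht]
  have hderivu : ∀ t ∈ Set.Icc (0:ℝ) T, HasDerivWithinAt u (g u t) (Set.Icc (0:ℝ) T) t := by
    intro t ht
    have hG : HasDerivAt (fun r => φ 0 + ∫ s in (0:ℝ)..r, g u s) (g u t) t :=
      ((hgcu.integral_hasStrictDerivAt 0 t).hasDerivAt).const_add (φ 0)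
    exact (hG.hasDerivWithinAt).congr (fun y hy => huInt y hy) (huInt t ht)
  have hgufold : (fun t : ℝ => f t (u t) (u (t - τ t (u t))) - A (u t)) = g u := by
    rw [hgdef]
  refine ⟨T, hT, u, ⟨hu1, huc.continuousOn, ?_, ?_⟩, ?_⟩
  · rw [hgufold]
    exact hgcu.continuousOn
  · intro t ht
    simpa only [hgdef] using hderivu t ht
  -- Uniqueness.
  · rintro v ⟨hv1, hvc, hgvc, hvd⟩ t htT
    have hgvfold : (fun t : ℝ => f t (v t) (v (t - τ t (v t))) - A (v t)) = g v := by
      rw [hgdef]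
    rw [hgvfold] at hgvc
    have hvd' : ∀ s ∈ Set.Icc (0:ℝ) T, HasDerivWithinAt v (g v s) (Set.Icc (0:ℝ) T) s := by
      intro s hs
      simpa only [hgdef] using hvd s hs
    have hv0 : v 0 = φ 0 := hv1 0 le_rfl
    have hvInt : ∀ r ∈ Set.Icc (0:ℝ) T, v r = φ 0 + ∫ s in (0:ℝ)..r, g v s := by
      intro r hr
      rcases eq_or_lt_of_le hr.1 with h | h
      · rw [← h, intervalIntegral.integral_same, add_zero]
        exact hv0
      · have hsub : Set.Icc (0:ℝ) r ⊆ Set.Iic T := fun x hx => le_trans hx.2 hr.2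
        have hder : ∀ x ∈ Set.Ioo (0:ℝ) r, HasDerivWithinAt v (g v x) (Set.Ioi x) x := by
          intro x hx
          have hxI : x ∈ Set.Icc (0:ℝ) T := ⟨hx.1.le, le_trans hx.2.le hr.2⟩
          have hnb : Set.Icc (0:ℝ) T ∈ nhds x :=
            Icc_mem_nhds hx.1 (lt_of_lt_of_le hx.2 hr.2)
          exact ((hvd' x hxI).hasDerivAt hnb).hasDerivWithinAt
        have hgi : IntervalIntegrable (g v) volume 0 r :=
          (hgvc.mono (Set.Icc_subset_Icc le_rfl hr.2)).intervalIntegrable_of_Icc hr.1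
        have key := intervalIntegral.integral_eq_sub_of_hasDeriv_right_of_le hr.1
          (hvc.mono hsub) hder hgi
        rw [key, hv0]
        abel
    have hcontdiff : ContinuousOn (fun r => ‖u r - v r‖) (Set.Icc (0:ℝ) T) :=
      (huc.continuousOn.sub (hvc.mono (fun x hx => hx.2))).norm
    obtain ⟨t₀, ht₀, hmax⟩ :=
      isCompact_Icc.exists_isMaxOn (Set.nonempty_Icc.mpr hT.le) hcontdiff
    set d : ℝ := ‖u t₀ - v t₀‖ with hddef
    have hd0 : 0 ≤ d := norm_nonneg _
    have hub : ∀ r ∈ Set.Icc (0:ℝ) T, ‖u r - v r‖ ≤ d := fun r hr => hmax hr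
    have hgd := lemB u v d hu1 hv1 hu2 hd0 hub
    have hint1 : IntervalIntegrable (g u) volume 0 t₀ := hgcu.intervalIntegrable _ _
    have hint2 : IntervalIntegrable (g v) volume 0 t₀ :=
      (hgvc.mono (Set.Icc_subset_Icc le_rfl ht₀.2)).intervalIntegrable_of_Icc ht₀.1
    have e0 : u t₀ - v t₀ = ∫ s in (0:ℝ)..t₀, (g u s - g v s) := by
      rw [huInt t₀ ht₀, hvInt t₀ ht₀, intervalIntegral.integral_sub hint1 hint2]
      abel
    have e2 : ∀ x ∈ Set.uIoc (0:ℝ) t₀, ‖g u x - g v x‖ ≤ C₂ * d := by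
      intro x hx
      rw [Set.uIoc_of_le ht₀.1] at hx
      exact hgd x ⟨hx.1.le, le_trans hx.2 ht₀.2⟩
    have e4 : |t₀ - 0| ≤ T := by rw [sub_zero, abs_of_nonneg ht₀.1]; exact ht₀.2
    have hkey : d ≤ 1/2 * d := by
      calc d = ‖∫ s in (0:ℝ)..t₀, (g u s - g v s)‖ := by rw [hddef, e0]
        _ ≤ (C₂ * d) * |t₀ - 0| := intervalIntegral.norm_integral_le_of_norm_le_const e2
        _ ≤ (C₂ * d) * T := mul_le_mul_of_nonneg_left e4 (mul_nonneg hC₂ hd0)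
        _ ≤ 1/2 * d := by nlinarith
    have hdz : d = 0 := by linarith
    rcases le_or_gt t 0 with h | h
    · rw [hv1 t h, hu1 t h]
    · have htI : t ∈ Set.Icc (0:ℝ) T := ⟨h.le, htT⟩
      have e := hub t htI
      rw [hdz] at e
      have : u t - v t = 0 := norm_le_zero_iff.mp e
      have e2 : u t = v t := sub_eq_zero.mp this
      exact e2.symm
end
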